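/- arXiv:1504.03391 — 11 statements merged into one kernel-verified Lean document; each statement's English description precedes it below -/
import Mathlib

section
/- For any function f : {0,1}^n → ℝ and any integer k with 1 ≤ k ≤ n, the Fourier weight of f above level k satisfies Σ_{S ⊆ [n], |S| > k} f̂(S)² ≤ (1/(16k²)) · Σ_{i=1}^n Σ_{j=1}^n ‖∂_{ij} f‖₂². -/
open Finset

noncomputable section

/-- The real value (0 or 1) of a Boolean coordinate. -/
def bval (b : Bool) : ℝ := if b then 1 else 0

/-- Expectation over the uniform distribution on `{0,1}^n`. -/
def EU {n : ℕ} (g : (Fin n → Bool) → ℝ) : ℝ :=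
  (∑ x : Fin n → Bool, g x) / 2 ^ n

/-- `ℓ₂` norm with respect to the uniform distribution. -/
def l2norm {n : ℕ} (g : (Fin n → Bool) → ℝ) : ℝ :=
  Real.sqrt (EU (fun x => g x ^ 2))

/-- `ℓ₁` norm with respect to the uniform distribution. -/
def l1norm {n : ℕ} (g : (Fin n → Bool) → ℝ) : ℝ :=
  EU (fun x => |g x|)

/-- Discrete partial derivative `∂_i f`. -/
def d1 {n : ℕ} (f : (Fin n → Bool) → ℝ) (i : Fin n) (x : Fin n → Bool) : ℝ :=
  f (Function.update x i true) - f (Function.update x i false)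

/-- Second-order discrete derivative `∂_{ij} f`, with `∂_{ii} f ≡ 0`. -/
def d2 {n : ℕ} (f : (Fin n → Bool) → ℝ) (i j : Fin n) (x : Fin n → Bool) : ℝ :=
  if i = j then 0 else
    f (Function.update (Function.update x i true) j true)
      - f (Function.update (Function.update x i true) j false)
      - f (Function.update (Function.update x i false) j true)
      + f (Function.update (Function.update x i false) j false)

/-- The parity (character) `χ_S(x) = (-1)^{Σ_{i∈S} x_i}`. -/
def chi {n : ℕ} (S : Finset (Fin n)) (x : Fin n → Bool) : ℝ :=
  ∏ i ∈ S, (if x i then (-1 : ℝ) else 1)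

/-- The Fourier coefficient `f̂(S) = E_{x∼U}[f(x) χ_S(x)]`. -/
def fcoeff {n : ℕ} (f : (Fin n → Bool) → ℝ) (S : Finset (Fin n)) : ℝ :=
  EU (fun x => f x * chi S x)

/-- Submodularity of a function on the Boolean cube. -/
def Submodular {n : ℕ} (f : (Fin n → Bool) → ℝ) : Prop :=
  ∀ x y, f (x ⊔ y) + f (x ⊓ y) ≤ f x + f y

/-- `f` is XOS: a maximum of finitely many nonnegative linear functions. -/
def IsXOS {n : ℕ} (f : (Fin n → Bool) → ℝ) : Prop :=
  ∃ (m : ℕ) (w : Fin (m + 1) → Fin n → ℝ),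
    (∀ c i, 0 ≤ w c i) ∧
    ∀ x, f x = Finset.univ.sup' Finset.univ_nonempty
      (fun c => ∑ i, w c i * bval (x i))

open Classical in
/-- Probability of an event under the uniform distribution on `{0,1}^n`. -/
def PrU {n : ℕ} (P : (Fin n → Bool) → Prop) : ℝ :=
  EU (fun x => if P x then 1 else 0)

/-- The threshold norm `‖h‖_T = sup{α ≥ 0 : Pr[|h(x)| ≥ α] ≥ α³}`. -/
def tnorm {n : ℕ} (h : (Fin n → Bool) → ℝ) : ℝ :=
  sSup {α : ℝ | 0 ≤ α ∧ α ^ 3 ≤ PrU (fun x => α ≤ |h x|)}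

end

noncomputable section Aux
variable {n : ℕ}

def eps (b : Bool) : ℝ := if b then -1 else 1

lemma chi_eq (S : Finset (Fin n)) (x : Fin n → Bool) :
    chi S x = ∏ i : Fin n, (if i ∈ S then eps (x i) else 1) := by
  rw [Finset.prod_ite_mem, Finset.univ_inter]; rfl

lemma sum_chi_mul (S T : Finset (Fin n)) :
    ∑ x : Fin n → Bool, chi S x * chi T x = if S = T then (2:ℝ)^n else 0 := by
  have h : ∀ x : Fin n → Bool, chi S x * chi T x
      = ∏ i : Fin n, ((if i ∈ S then eps (x i) else 1) * (if i ∈ T then eps (x i) else 1)) := by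
    intro x; rw [chi_eq, chi_eq, ← Finset.prod_mul_distrib]
  simp only [h]
  rw [← Fintype.prod_sum (fun i (b : Bool) => (if i ∈ S then eps b else 1) * (if i ∈ T then eps b else 1))]
  have hfac : ∀ i : Fin n,
      (∑ b : Bool, (if i ∈ S then eps b else 1) * (if i ∈ T then eps b else 1))
        = if (i ∈ S ↔ i ∈ T) then (2:ℝ) else 0 := by
    intro i
    by_cases hS : i ∈ S <;> by_cases hT : i ∈ T <;>
      simp [hS, hT, eps] <;> norm_num
  simp only [hfac]
  by_cases h : S = T
  · subst h; simp
  · rw [if_neg h]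
    obtain ⟨i, hi⟩ : ∃ i, ¬(i ∈ S ↔ i ∈ T) := by
      by_contra hc
      push_neg at hc
      exact h (Finset.ext fun i => hc i)
    exact Finset.prod_eq_zero (mem_univ i) (by rw [if_neg hi])

lemma sum_chi_chi (x y : Fin n → Bool) :
    ∑ S : Finset (Fin n), chi S x * chi S y = if x = y then (2:ℝ)^n else 0 := by
  have h : ∀ S : Finset (Fin n), chi S x * chi S y
      = (∏ i ∈ S, eps (x i) * eps (y i)) * ∏ i ∈ Sᶜ, (1:ℝ) := by
    intro S; rw [prod_const_one, mul_one, chi, chi, ← Finset.prod_mul_distrib]; rfl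
  simp only [h]
  rw [← Fintype.prod_add]
  by_cases hxy : x = y
  · subst hxy
    rw [if_pos rfl]
    have : ∀ i : Fin n, eps (x i) * eps (x i) + 1 = 2 := by
      intro i; cases x i <;> simp [eps] <;> norm_num
    simp only [this]; simp
  · rw [if_neg hxy]
    obtain ⟨i, hi⟩ : ∃ i, x i ≠ y i := by
      by_contra hc; push_neg at hc; exact hxy (funext hc)
    refine Finset.prod_eq_zero (mem_univ i) ?_
    cases hx : x i <;> cases hy : y i <;> simp [hx, hy] at hi ⊢ <;> simp [eps] <;> norm_num

lemma two_pow_ne (n : ℕ) : ((2:ℝ)^n) ≠ 0 := by positivity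

lemma inversion (f : (Fin n → Bool) → ℝ) (x : Fin n → Bool) :
    f x = ∑ S : Finset (Fin n), fcoeff f S * chi S x := by
  have h1 : ∑ S : Finset (Fin n), fcoeff f S * chi S x
      = (∑ S : Finset (Fin n), ∑ y : Fin n → Bool, f y * chi S y * chi S x) / 2^n := by
    rw [Finset.sum_div]
    refine Finset.sum_congr rfl fun S _ => ?_
    rw [fcoeff, EU, div_mul_eq_mul_div, Finset.sum_mul]
  rw [h1, Finset.sum_comm]
  have h2 : ∀ y : Fin n → Bool, ∑ S : Finset (Fin n), f y * chi S y * chi S x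
      = if y = x then f y * 2^n else 0 := by
    intro y
    have : ∑ S : Finset (Fin n), f y * chi S y * chi S x
        = f y * ∑ S : Finset (Fin n), chi S y * chi S x := by
      rw [Finset.mul_sum]; exact Finset.sum_congr rfl fun S _ => by ring
    rw [this, sum_chi_chi]
    by_cases h : y = x <;> simp [h]
  simp only [h2]
  rw [Finset.sum_ite_eq' Finset.univ x (fun y => f y * 2^n)]
  simp [two_pow_ne n]

lemma chi_update_not_mem (S : Finset (Fin n)) {i : Fin n} (hi : i ∉ S) (x : Fin n → Bool) (b : Bool) :
    chi S (Function.update x i b) = chi S x := by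
  refine Finset.prod_congr rfl fun l hl => ?_
  rw [Function.update_of_ne (by rintro rfl; exact hi hl)]

lemma chi_update_mem (S : Finset (Fin n)) {i : Fin n} (hi : i ∈ S) (x : Fin n → Bool) (b : Bool) :
    chi S (Function.update x i b) = eps b * chi (S.erase i) x := by
  unfold chi
  rw [← Finset.mul_prod_erase _ _ hi, Function.update_self]
  have h2 : (∏ l ∈ S.erase i, if Function.update x i b l then (-1:ℝ) else 1)
      = ∏ l ∈ S.erase i, if x l then (-1:ℝ) else 1 := by
    refine Finset.prod_congr rfl fun l hl => ?_
    rw [Function.update_of_ne (Finset.ne_of_mem_erase hl)]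
  rw [h2]
  cases b <;> simp [eps, chi]

lemma d2_chi (S : Finset (Fin n)) {i j : Fin n} (hij : i ≠ j) (x : Fin n → Bool) :
    d2 (chi S) i j x =
      if i ∈ S ∧ j ∈ S then 4 * chi ((S.erase j).erase i) x else 0 := by
  unfold d2
  rw [if_neg hij]
  by_cases hj : j ∈ S
  · by_cases hi : i ∈ S
    · have hi' : i ∈ S.erase j := Finset.mem_erase.2 ⟨hij, hi⟩
      rw [chi_update_mem S hj, chi_update_mem S hj, chi_update_mem S hj, chi_update_mem S hj,
        chi_update_mem _ hi', chi_update_mem _ hi', if_pos ⟨hi, hj⟩]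
      simp [eps]; ring
    · have hi' : i ∉ S.erase j := fun h => hi (Finset.mem_of_mem_erase h)
      rw [chi_update_mem S hj, chi_update_mem S hj, chi_update_mem S hj, chi_update_mem S hj,
        chi_update_not_mem _ hi', chi_update_not_mem _ hi',
        if_neg (by tauto)]
      ring
  · rw [chi_update_not_mem S hj, chi_update_not_mem S hj,
      chi_update_not_mem S hj, chi_update_not_mem S hj, if_neg (by tauto)]
    by_cases hi : i ∈ S
    · rw [chi_update_mem S hi, chi_update_mem S hi]; ring
    · rw [chi_update_not_mem S hi, chi_update_not_mem S hi]; ring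

lemma d2_expand (f : (Fin n → Bool) → ℝ) {i j : Fin n} (hij : i ≠ j) (x : Fin n → Bool) :
    d2 f i j x = ∑ S : Finset (Fin n), fcoeff f S * d2 (chi S) i j x := by
  unfold d2
  simp only [if_neg hij]
  rw [inversion f (Function.update (Function.update x i true) j true),
    inversion f (Function.update (Function.update x i true) j false),
    inversion f (Function.update (Function.update x i false) j true),
    inversion f (Function.update (Function.update x i false) j false),
    ← Finset.sum_sub_distrib, ← Finset.sum_sub_distrib, ← Finset.sum_add_distrib]
  exact Finset.sum_congr rfl fun S _ => by ring

end Aux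

section Aux2
variable {n : ℕ}

lemma EU_sq_sum_chi (s : Finset (Finset (Fin n))) (m : Finset (Fin n) → Finset (Fin n))
    (hm : ∀ S ∈ s, ∀ T ∈ s, m S = m T → S = T) (b : Finset (Fin n) → ℝ) :
    EU (fun x => (∑ S ∈ s, b S * chi (m S) x) ^ 2) = ∑ S ∈ s, b S ^ 2 := by
  unfold EU
  have hx : ∀ x : Fin n → Bool, (∑ S ∈ s, b S * chi (m S) x) ^ 2
      = ∑ S ∈ s, ∑ T ∈ s, (b S * b T) * (chi (m S) x * chi (m T) x) := by
    intro x
    rw [sq, Finset.sum_mul_sum]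
    exact Finset.sum_congr rfl fun S _ => Finset.sum_congr rfl fun T _ => by ring
  simp only [hx]
  rw [Finset.sum_comm]
  have hS : ∀ S ∈ s, (∑ x : Fin n → Bool, ∑ T ∈ s, (b S * b T) * (chi (m S) x * chi (m T) x))
      = b S ^ 2 * 2^n := by
    intro S hSs
    rw [Finset.sum_comm, Finset.sum_eq_single_of_mem S hSs]
    · rw [← Finset.mul_sum, sum_chi_mul, if_pos rfl]; ring
    · intro T hT hTS
      rw [← Finset.mul_sum, sum_chi_mul,
        if_neg (fun h => hTS (hm T hT S hSs h.symm)), mul_zero]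
  rw [Finset.sum_congr rfl hS, ← Finset.sum_mul, mul_div_assoc, div_self (two_pow_ne n), mul_one]

lemma erase_erase_inj {S T : Finset (Fin n)} {i j : Fin n}
    (hiS : i ∈ S) (hjS : j ∈ S) (hiT : i ∈ T) (hjT : j ∈ T)
    (h : (S.erase j).erase i = (T.erase j).erase i) : S = T := by
  ext a
  by_cases hai : a = i
  · subst hai; simp [hiS, hiT]
  by_cases haj : a = j
  · subst haj; simp [hjS, hjT]
  · have h2 := Finset.ext_iff.1 h a
    simp only [Finset.mem_erase, hai, haj, ne_eq, not_false_iff, true_and] at h2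
    exact h2

lemma EU_d2_sq (f : (Fin n → Bool) → ℝ) {i j : Fin n} (hij : i ≠ j) :
    EU (fun x => d2 f i j x ^ 2)
      = 16 * ∑ S ∈ Finset.univ.filter (fun S : Finset (Fin n) => i ∈ S ∧ j ∈ S),
          fcoeff f S ^ 2 := by
  classical
  have ht : ∀ x, d2 f i j x
      = ∑ S ∈ Finset.univ.filter (fun S : Finset (Fin n) => i ∈ S ∧ j ∈ S),
          (4 * fcoeff f S) * chi ((S.erase j).erase i) x := by
    intro x
    rw [d2_expand f hij x, Finset.sum_filter]
    refine Finset.sum_congr rfl fun S _ => ?_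
    rw [d2_chi S hij x]
    by_cases h : i ∈ S ∧ j ∈ S
    · rw [if_pos h, if_pos h]; ring
    · rw [if_neg h, if_neg h, mul_zero]
  simp only [ht]
  have hinj : ∀ S ∈ Finset.univ.filter (fun S : Finset (Fin n) => i ∈ S ∧ j ∈ S),
      ∀ T ∈ Finset.univ.filter (fun S : Finset (Fin n) => i ∈ S ∧ j ∈ S),
      (S.erase j).erase i = (T.erase j).erase i → S = T := by
    intro S hS T hT h
    simp only [Finset.mem_filter] at hS hT
    exact erase_erase_inj hS.2.1 hS.2.2 hT.2.1 hT.2.2 h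
  rw [EU_sq_sum_chi _ _ hinj, Finset.mul_sum]
  exact Finset.sum_congr rfl fun S _ => by ring

lemma EU_sq_nonneg (g : (Fin n → Bool) → ℝ) : 0 ≤ EU (fun x => g x ^ 2) := by
  unfold EU; positivity

lemma l2norm_sq (g : (Fin n → Bool) → ℝ) : l2norm g ^ 2 = EU (fun x => g x ^ 2) :=
  Real.sq_sqrt (EU_sq_nonneg g)

lemma count_pairs (S : Finset (Fin n)) :
    ∑ i : Fin n, ∑ j : Fin n, (if i ∈ S ∧ j ∈ S ∧ i ≠ j then (1:ℝ) else 0)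
      = (S.card : ℝ) * ((S.card : ℝ) - 1) := by
  have h1 : ∀ i : Fin n, (∑ j : Fin n, if i ∈ S ∧ j ∈ S ∧ i ≠ j then (1:ℝ) else 0)
      = if i ∈ S then ((S.card : ℝ) - 1) else 0 := by
    intro i
    by_cases hi : i ∈ S
    · rw [if_pos hi]
      have h2 : ∀ j : Fin n, (if i ∈ S ∧ j ∈ S ∧ i ≠ j then (1:ℝ) else 0)
          = if j ∈ S.erase i then (1:ℝ) else 0 := by
        intro j
        have : (i ∈ S ∧ j ∈ S ∧ i ≠ j) ↔ j ∈ S.erase i := by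
          simp only [Finset.mem_erase]; aesop
        simp only [this]
      simp only [h2]
      rw [Finset.sum_ite_mem, Finset.univ_inter, Finset.sum_const,
        Finset.card_erase_of_mem hi, nsmul_eq_mul, mul_one]
      have : 1 ≤ S.card := Finset.card_pos.2 ⟨i, hi⟩
      push_cast [this]
      ring
    · rw [if_neg hi]
      exact Finset.sum_eq_zero fun j _ => if_neg (by tauto)
  simp only [h1]
  rw [Finset.sum_ite_mem, Finset.univ_inter, Finset.sum_const, nsmul_eq_mul]

end Aux2

/-- For any f : {0,1}^n → ℝ and 1 ≤ k ≤ n,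
Σ_{|S|>k} f̂(S)² ≤ (1/(16k²)) · Σ_{i,j} ‖∂_{ij} f‖₂². -/
theorem stmt0 {n : ℕ} (f : (Fin n → Bool) → ℝ) (k : ℕ) (hk1 : 1 ≤ k) (hkn : k ≤ n) :
    ∑ S ∈ Finset.univ.filter (fun S : Finset (Fin n) => k < S.card), fcoeff f S ^ 2
      ≤ 1 / (16 * (k : ℝ) ^ 2) * ∑ i : Fin n, ∑ j : Fin n, l2norm (d2 f i j) ^ 2 := by
  classical
  have tswap : ∀ (g : Fin n → Fin n → Finset (Fin n) → ℝ),
      (∑ i : Fin n, ∑ j : Fin n, ∑ S : Finset (Fin n), g i j S)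
        = ∑ S : Finset (Fin n), ∑ i : Fin n, ∑ j : Fin n, g i j S := by
    intro g
    calc (∑ i : Fin n, ∑ j : Fin n, ∑ S : Finset (Fin n), g i j S)
        = ∑ i : Fin n, ∑ S : Finset (Fin n), ∑ j : Fin n, g i j S :=
          Finset.sum_congr rfl fun i _ => Finset.sum_comm
      _ = ∑ S : Finset (Fin n), ∑ i : Fin n, ∑ j : Fin n, g i j S := Finset.sum_comm
  have hRHS : ∑ i : Fin n, ∑ j : Fin n, l2norm (d2 f i j) ^ 2
      = ∑ S : Finset (Fin n),
          16 * fcoeff f S ^ 2 * ((S.card : ℝ) * ((S.card : ℝ) - 1)) := by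
    have step1 : ∀ i j : Fin n, l2norm (d2 f i j) ^ 2
        = ∑ S : Finset (Fin n),
            (if i ∈ S ∧ j ∈ S ∧ i ≠ j then (16:ℝ) * fcoeff f S ^ 2 else 0) := by
      intro i j
      by_cases hij : i = j
      · subst hij
        have hz : d2 f i i = fun _ => 0 := by funext x; simp [d2]
        rw [l2norm_sq, hz]
        simp [EU]
      · rw [l2norm_sq, EU_d2_sq f hij, Finset.mul_sum, Finset.sum_filter]
        refine Finset.sum_congr rfl fun S _ => ?_
        by_cases h : i ∈ S ∧ j ∈ S
        · rw [if_pos h, if_pos ⟨h.1, h.2, hij⟩]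
        · rw [if_neg h, if_neg (by tauto)]
    simp only [step1]
    rw [tswap]
    refine Finset.sum_congr rfl fun S _ => ?_
    have hpull : ∀ i j : Fin n,
        (if i ∈ S ∧ j ∈ S ∧ i ≠ j then (16:ℝ) * fcoeff f S ^ 2 else 0)
          = (16 * fcoeff f S ^ 2) * (if i ∈ S ∧ j ∈ S ∧ i ≠ j then (1:ℝ) else 0) := by
      intro i j; by_cases h : i ∈ S ∧ j ∈ S ∧ i ≠ j <;> simp [h]
    simp only [hpull, ← Finset.mul_sum]
    rw [count_pairs]
  rw [hRHS]
  have hk0 : (0:ℝ) < 16 * (k:ℝ)^2 := by positivity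
  rw [div_mul_eq_mul_div, one_mul, le_div_iff₀ hk0]
  calc (∑ S ∈ Finset.univ.filter (fun S : Finset (Fin n) => k < S.card),
          fcoeff f S ^ 2) * (16 * (k:ℝ)^2)
      = ∑ S ∈ Finset.univ.filter (fun S : Finset (Fin n) => k < S.card),
          fcoeff f S ^ 2 * (16 * (k:ℝ)^2) := Finset.sum_mul _ _ _
    _ ≤ ∑ S ∈ Finset.univ.filter (fun S : Finset (Fin n) => k < S.card),
          16 * fcoeff f S ^ 2 * ((S.card : ℝ) * ((S.card : ℝ) - 1)) := by
        refine Finset.sum_le_sum fun S hS => ?_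
        have hcard : k + 1 ≤ S.card := (Finset.mem_filter.1 hS).2
        have hm : (k:ℝ) + 1 ≤ (S.card : ℝ) := by exact_mod_cast hcard
        have hk' : (1:ℝ) ≤ (k:ℝ) := by exact_mod_cast hk1
        have hkk : (k:ℝ) * (k:ℝ) ≤ (S.card : ℝ) * ((S.card : ℝ) - 1) :=
          mul_le_mul (by linarith) (by linarith) (by linarith) (by linarith)
        nlinarith [sq_nonneg (fcoeff f S), hkk]
    _ ≤ ∑ S : Finset (Fin n),
          16 * fcoeff f S ^ 2 * ((S.card : ℝ) * ((S.card : ℝ) - 1)) := by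
        refine Finset.sum_le_sum_of_subset_of_nonneg (Finset.filter_subset _ _)
          fun S _ _ => ?_
        rcases Nat.eq_zero_or_pos S.card with h0 | h1
        · simp [h0]
        · have : (1:ℝ) ≤ (S.card : ℝ) := by exact_mod_cast h1
          have h2 : (0:ℝ) ≤ (S.card : ℝ) * ((S.card : ℝ) - 1) :=
            mul_nonneg (by positivity) (by linarith)
          positivity
end

section
/- For any XOS function f : {0,1}^n → ℝ₊ and any point x ∈ {0,1}^n, the sum of squares of second-order discrete derivatives over coordinates set to 1 satisfies Σ_{i,j : x_i = x_j = 1} (∂_{ij} f(x))² ≤ 5 · (f(x))². -/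
open Finset

private lemma bval_nonneg' (b : Bool) : 0 ≤ bval b := by
  cases b <;> simp [bval]

private lemma upd_comm' {n : ℕ} (x : Fin n → Bool) {i j : Fin n} (h : i ≠ j) (a b : Bool) :
    Function.update (Function.update x i a) j b = Function.update (Function.update x j b) i a := by
  funext k
  rcases eq_or_ne k j with rfl | hkj
  · rw [Function.update_self, Function.update_of_ne (Ne.symm h), Function.update_self]
  · rcases eq_or_ne k i with rfl | hki
    · rw [Function.update_of_ne hkj, Function.update_self, Function.update_self]
    · rw [Function.update_of_ne hkj, Function.update_of_ne hki, Function.update_of_ne hki,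
        Function.update_of_ne hkj]

private lemma d2_symm' {n : ℕ} (f : (Fin n → Bool) → ℝ) (i j : Fin n) (x : Fin n → Bool) :
    d2 f i j x = d2 f j i x := by
  rcases eq_or_ne i j with rfl | h
  · rfl
  · simp only [d2, if_neg h, if_neg (Ne.symm h)]
    rw [upd_comm' x h true true, upd_comm' x h true false,
        upd_comm' x h false true, upd_comm' x h false false]
    ring

private lemma upd_true_self {n : ℕ} (y : Fin n → Bool) (k : Fin n) (hk : y k = true) :
    Function.update y k true = y := by
  funext l
  rcases eq_or_ne l k with rfl | h
  · rw [Function.update_self, hk]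
  · rw [Function.update_of_ne h]

/-- For an XOS function f and any x,
Σ_{i,j : x_i=x_j=1} (∂_{ij} f(x))² ≤ 5 f(x)². -/
theorem stmt1 {n : ℕ} (f : (Fin n → Bool) → ℝ) (hf : IsXOS f) (x : Fin n → Bool) :
    ∑ i ∈ Finset.univ.filter (fun i : Fin n => x i = true),
      ∑ j ∈ Finset.univ.filter (fun j : Fin n => x j = true), d2 f i j x ^ 2
      ≤ 5 * f x ^ 2 := by
  classical
  obtain ⟨m, w, hw0, hwf⟩ := hf
  set S : Finset (Fin n) := Finset.univ.filter (fun i : Fin n => x i = true) with hS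
  set L : Fin (m + 1) → (Fin n → Bool) → ℝ := fun c y => ∑ i, w c i * bval (y i) with hL
  have hle : ∀ c y, L c y ≤ f y := by
    intro c y
    rw [hwf y]
    exact Finset.le_sup' (fun c => ∑ i, w c i * bval (y i)) (Finset.mem_univ c)
  have hex : ∀ y, ∃ c, f y = L c y := by
    intro y
    obtain ⟨c, -, hc⟩ := Finset.exists_mem_eq_sup' Finset.univ_nonempty
      (fun c => ∑ i, w c i * bval (y i))
    exact ⟨c, (hwf y).trans hc⟩
  have hLsupp : ∀ (c : Fin (m + 1)) (y : Fin n → Bool),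
      L c y = ∑ i ∈ Finset.univ.filter (fun i : Fin n => y i = true), w c i := by
    intro c y
    rw [Finset.sum_filter, hL]
    refine Finset.sum_congr rfl fun i _ => ?_
    by_cases h : y i = true <;> simp [h, bval]
  have hF0 : 0 ≤ f x := by
    refine le_trans ?_ (hle 0 x)
    exact Finset.sum_nonneg fun i _ => mul_nonneg (hw0 0 i) (bval_nonneg' _)
  -- value of L after setting a true coordinate to false
  have hLupd : ∀ (c : Fin (m + 1)) (y : Fin n → Bool) (i : Fin n), y i = true →
      L c (Function.update y i false) = L c y - w c i := by
    intro c y i hyi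
    have h1 : ∀ k ∈ Finset.univ.erase i,
        w c k * bval (Function.update y i false k) = w c k * bval (y k) := by
      intro k hk
      rw [Function.update_of_ne (Finset.ne_of_mem_erase hk)]
    rw [hL]
    simp only
    rw [← Finset.sum_erase_add Finset.univ (fun k => w c k * bval (Function.update y i false k))
          (Finset.mem_univ i),
        ← Finset.sum_erase_add Finset.univ (fun k => w c k * bval (y k)) (Finset.mem_univ i),
        Finset.sum_congr rfl h1, Function.update_self, hyi,
        show bval false = (0:ℝ) by simp [bval], show bval true = (1:ℝ) by simp [bval]]
    ring
  -- monotonicity under setting a coordinate to false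
  have hmono : ∀ (y : Fin n → Bool) (i : Fin n), f (Function.update y i false) ≤ f y := by
    intro y i
    obtain ⟨c, hc⟩ := hex (Function.update y i false)
    rw [hc]
    refine le_trans ?_ (hle c y)
    refine Finset.sum_le_sum fun k _ => ?_
    rcases eq_or_ne k i with rfl | hk
    · rw [Function.update_self]
      have h0 : bval false = 0 := by simp [bval]
      rw [h0, mul_zero]
      exact mul_nonneg (hw0 c k) (bval_nonneg' _)
    · rw [Function.update_of_ne hk]
  have hdrop : ∀ (y : Fin n → Bool) (i : Fin n) (c : Fin (m + 1)), f y = L c y → y i = true →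
      f y - w c i ≤ f (Function.update y i false) := by
    intro y i c hc hyi
    have h := hle c (Function.update y i false)
    rw [hLupd c y i hyi] at h
    linarith
  have hdrop2 : ∀ (y : Fin n → Bool) (i j : Fin n) (c : Fin (m + 1)), i ≠ j →
      f y = L c y → y i = true → y j = true →
      f y - w c i - w c j ≤ f (Function.update (Function.update y j false) i false) := by
    intro y i j c hij hc hyi hyj
    have h1 : (Function.update y j false) i = true := by
      rw [Function.update_of_ne hij]; exact hyi
    have h := hle c (Function.update (Function.update y j false) i false)
    rw [hLupd c _ i h1, hLupd c y j hyj] at h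
    linarith
  obtain ⟨c0, hc0⟩ := hex x
  have hFa : ∑ i ∈ S, w c0 i = f x := by
    rw [hS, ← hLsupp c0 x, hc0]
  -- support of the point with j flipped to false
  have hSerase : ∀ j : Fin n,
      Finset.univ.filter (fun i : Fin n => (Function.update x j false) i = true) = S.erase j := by
    intro j
    ext i
    simp only [Finset.mem_filter, Finset.mem_erase, Finset.mem_univ, true_and, hS]
    constructor
    · intro h
      rcases eq_or_ne i j with rfl | hij
      · rw [Function.update_self] at h; exact absurd h (by simp)
      · rw [Function.update_of_ne hij] at h; exact ⟨hij, h⟩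
    · rintro ⟨hij, h⟩
      rw [Function.update_of_ne hij]; exact h
  -- the second derivative as a difference of two first-order drops
  have hd2eq : ∀ i ∈ S, ∀ j ∈ S, i ≠ j → d2 f i j x =
      (f x - f (Function.update x i false)) -
      (f (Function.update x j false) -
        f (Function.update (Function.update x j false) i false)) := by
    intro i hi j hj hij
    have hxi : x i = true := (Finset.mem_filter.1 hi).2
    have hxj : x j = true := (Finset.mem_filter.1 hj).2
    have e1 : Function.update x i true = x := upd_true_self x i hxi
    have e3 : Function.update (Function.update x i false) j true
        = Function.update x i false := by
      refine upd_true_self _ j ?_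
      rw [Function.update_of_ne (Ne.symm hij)]; exact hxj
    have e4 : Function.update (Function.update x i false) j false
        = Function.update (Function.update x j false) i false :=
      Function.update_comm hij false false x
    simp only [d2, if_neg hij]
    rw [e1, upd_true_self x j hxj, e3, e4]
    ring
  -- pointwise bound |d2| ≤ a_i + a_j
  have hpt : ∀ i ∈ S, ∀ j ∈ S, |d2 f i j x| ≤ w c0 i + w c0 j := by
    intro i hi j hj
    rcases eq_or_ne i j with rfl | hij
    · have h0 : d2 f i i x = 0 := by simp [d2]
      rw [h0, abs_zero]
      have := hw0 c0 i
      linarith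
    · have hxi : x i = true := (Finset.mem_filter.1 hi).2
      have hxj : x j = true := (Finset.mem_filter.1 hj).2
      rw [hd2eq i hi j hj hij]
      have h1 : f x - w c0 i ≤ f (Function.update x i false) := hdrop x i c0 hc0 hxi
      have h2 : f (Function.update x i false) ≤ f x := hmono x i
      have h3 : f (Function.update (Function.update x j false) i false)
          ≤ f (Function.update x j false) := hmono _ i
      have h4 : f x - w c0 i - w c0 j
          ≤ f (Function.update (Function.update x j false) i false) :=
        hdrop2 x i j c0 hij hc0 hxi hxj
      have h5 : f (Function.update x j false) ≤ f x := hmono x j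
      have h6 : 0 ≤ w c0 j := hw0 c0 j
      rw [abs_le]
      constructor <;> linarith
  -- column sums: for each j, ∑_i |d2 i j| ≤ 2 f(x)
  have hcol : ∀ j ∈ S, ∑ i ∈ S, |d2 f i j x| ≤ 2 * f x := by
    intro j hj
    have hxj : x j = true := (Finset.mem_filter.1 hj).2
    obtain ⟨cj, hcj⟩ := hex (Function.update x j false)
    have hdiag : |d2 f j j x| = 0 := by simp [d2]
    rw [← Finset.sum_erase S hdiag]
    have hbnd : ∀ i ∈ S.erase j, |d2 f i j x| ≤
        (f x - f (Function.update x i false)) +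
        (f (Function.update x j false) -
          f (Function.update (Function.update x j false) i false)) := by
      intro i hi
      have hij : i ≠ j := Finset.ne_of_mem_erase hi
      have hiS : i ∈ S := Finset.mem_of_mem_erase hi
      rw [hd2eq i hiS j hj hij]
      have h2 : f (Function.update x i false) ≤ f x := hmono x i
      have h3 : f (Function.update (Function.update x j false) i false)
          ≤ f (Function.update x j false) := hmono _ i
      rw [abs_le]
      constructor <;> linarith
    have hD : ∑ i ∈ S.erase j, (f x - f (Function.update x i false)) ≤ f x := by
      have step1 : ∑ i ∈ S.erase j, (f x - f (Function.update x i false))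
          ≤ ∑ i ∈ S.erase j, w c0 i := by
        refine Finset.sum_le_sum fun i hi => ?_
        have hiS : i ∈ S := Finset.mem_of_mem_erase hi
        have hxi : x i = true := (Finset.mem_filter.1 hiS).2
        have := hdrop x i c0 hc0 hxi
        linarith
      have step2 : ∑ i ∈ S.erase j, w c0 i ≤ ∑ i ∈ S, w c0 i :=
        Finset.sum_le_sum_of_subset_of_nonneg (Finset.erase_subset j S)
          (fun i _ _ => hw0 c0 i)
      rw [hFa] at step2
      linarith
    have hE : ∑ i ∈ S.erase j,
        (f (Function.update x j false) -
          f (Function.update (Function.update x j false) i false)) ≤ f x := by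
      have step1 : ∑ i ∈ S.erase j,
          (f (Function.update x j false) -
            f (Function.update (Function.update x j false) i false))
          ≤ ∑ i ∈ S.erase j, w cj i := by
        refine Finset.sum_le_sum fun i hi => ?_
        have hij : i ≠ j := Finset.ne_of_mem_erase hi
        have hiS : i ∈ S := Finset.mem_of_mem_erase hi
        have hxi : x i = true := (Finset.mem_filter.1 hiS).2
        have hyi : (Function.update x j false) i = true := by
          rw [Function.update_of_ne hij]; exact hxi
        have := hdrop (Function.update x j false) i cj hcj hyi
        linarith
      have step2 : ∑ i ∈ S.erase j, w cj i = f (Function.update x j false) := by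
        rw [← hSerase j, ← hLsupp cj (Function.update x j false), hcj]
      have step3 : f (Function.update x j false) ≤ f x := hmono x j
      linarith
    calc ∑ i ∈ S.erase j, |d2 f i j x|
        ≤ ∑ i ∈ S.erase j, ((f x - f (Function.update x i false)) +
            (f (Function.update x j false) -
              f (Function.update (Function.update x j false) i false))) :=
          Finset.sum_le_sum hbnd
      _ = (∑ i ∈ S.erase j, (f x - f (Function.update x i false))) +
          ∑ i ∈ S.erase j,
            (f (Function.update x j false) -
              f (Function.update (Function.update x j false) i false)) :=
          Finset.sum_add_distrib
      _ ≤ 2 * f x := by linarith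
  -- row sums by symmetry
  have hrow : ∀ i ∈ S, ∑ j ∈ S, |d2 f i j x| ≤ 2 * f x := by
    intro i hi
    calc ∑ j ∈ S, |d2 f i j x| = ∑ j ∈ S, |d2 f j i x| :=
          Finset.sum_congr rfl fun j _ => by rw [d2_symm']
      _ ≤ 2 * f x := hcol i hi
  -- assemble
  have key : ∀ i ∈ S, ∀ j ∈ S,
      d2 f i j x ^ 2 ≤ (w c0 i + w c0 j) * |d2 f i j x| := by
    intro i hi j hj
    calc d2 f i j x ^ 2 = |d2 f i j x| * |d2 f i j x| := by
          rw [← sq_abs]; ring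
      _ ≤ (w c0 i + w c0 j) * |d2 f i j x| :=
          mul_le_mul_of_nonneg_right (hpt i hi j hj) (abs_nonneg _)
  have hp1 : ∑ i ∈ S, ∑ j ∈ S, w c0 i * |d2 f i j x| ≤ 2 * f x * f x := by
    calc ∑ i ∈ S, ∑ j ∈ S, w c0 i * |d2 f i j x|
        ≤ ∑ i ∈ S, w c0 i * (2 * f x) := by
          refine Finset.sum_le_sum fun i hi => ?_
          rw [← Finset.mul_sum]
          exact mul_le_mul_of_nonneg_left (hrow i hi) (hw0 c0 i)
      _ = (∑ i ∈ S, w c0 i) * (2 * f x) := by rw [← Finset.sum_mul]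
      _ = 2 * f x * f x := by rw [hFa]; ring
  have hp2 : ∑ i ∈ S, ∑ j ∈ S, w c0 j * |d2 f i j x| ≤ 2 * f x * f x := by
    rw [Finset.sum_comm]
    calc ∑ j ∈ S, ∑ i ∈ S, w c0 j * |d2 f i j x|
        ≤ ∑ j ∈ S, w c0 j * (2 * f x) := by
          refine Finset.sum_le_sum fun j hj => ?_
          rw [← Finset.mul_sum]
          exact mul_le_mul_of_nonneg_left (hcol j hj) (hw0 c0 j)
      _ = (∑ j ∈ S, w c0 j) * (2 * f x) := by rw [← Finset.sum_mul]
      _ = 2 * f x * f x := by rw [hFa]; ring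
  calc ∑ i ∈ S, ∑ j ∈ S, d2 f i j x ^ 2
      ≤ ∑ i ∈ S, ∑ j ∈ S, (w c0 i + w c0 j) * |d2 f i j x| := by
        refine Finset.sum_le_sum fun i hi => Finset.sum_le_sum fun j hj => key i hi j hj
    _ = (∑ i ∈ S, ∑ j ∈ S, w c0 i * |d2 f i j x|) +
        ∑ i ∈ S, ∑ j ∈ S, w c0 j * |d2 f i j x| := by
        rw [← Finset.sum_add_distrib]
        refine Finset.sum_congr rfl fun i _ => ?_
        rw [← Finset.sum_add_distrib]
        exact Finset.sum_congr rfl fun j _ => by ring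
    _ ≤ 2 * f x * f x + 2 * f x * f x := add_le_add hp1 hp2
    _ ≤ 5 * f x ^ 2 := by nlinarith [mul_self_nonneg (f x)]
end

section
/- For any submodular function f : {0,1}^n → ℝ, any coordinate i ∈ [n] and any subset of coordinates A ⊆ [n], Σ_{j ∈ A} ‖∂_{ij} f‖₁ ≤ 2 · √|A| · ‖∂_i f‖₂. -/
open Finset

noncomputable section

namespace Aux

variable {n : ℕ}

/-- the involution flipping coordinate j -/
def flipj (j : Fin n) : (Fin n → Bool) ≃ (Fin n → Bool) where
  toFun x := Function.update x j (!(x j))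
  invFun x := Function.update x j (!(x j))
  left_inv x := by
    funext k
    rcases eq_or_ne k j with rfl | hk
    · simp
    · simp [Function.update_of_ne hk]
  right_inv x := by
    funext k
    rcases eq_or_ne k j with rfl | hk
    · simp
    · simp [Function.update_of_ne hk]

lemma sum_pair (j : Fin n) (h : (Fin n → Bool) → ℝ) :
    2 * ∑ x : Fin n → Bool, h x
      = ∑ x : Fin n → Bool,
          (h (Function.update x j true) + h (Function.update x j false)) := by
  have h1 : ∑ x : Fin n → Bool, h (flipj j x) = ∑ x : Fin n → Bool, h x :=
    Fintype.sum_equiv (flipj j) _ _ (fun x => rfl)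
  have : 2 * ∑ x : Fin n → Bool, h x
      = ∑ x : Fin n → Bool, (h x + h (flipj j x)) := by
    rw [Finset.sum_add_distrib, h1]; ring
  rw [this]
  refine Finset.sum_congr rfl (fun x _ => ?_)
  rcases hxj : x j with _ | _
  · have hx : Function.update x j false = x := by
      rw [← hxj]; exact Function.update_eq_self j x
    have : flipj j x = Function.update x j true := by
      simp [flipj, hxj]
    rw [this, hx]; ring
  · have hx : Function.update x j true = x := by
      rw [← hxj]; exact Function.update_eq_self j x
    have : flipj j x = Function.update x j false := by
      simp [flipj, hxj]
    rw [this, hx]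

def eps (b : Bool) : ℝ := if b then -1 else 1

lemma sum_deriv (j : Fin n) (h : (Fin n → Bool) → ℝ) :
    2 * ∑ x : Fin n → Bool, h x * eps (x j)
      = ∑ x : Fin n → Bool,
          (h (Function.update x j false) - h (Function.update x j true)) := by
  rw [sum_pair j (fun x => h x * eps (x j))]
  refine Finset.sum_congr rfl (fun x _ => ?_)
  simp [eps, Function.update_self]
  ring

lemma sum_eps_eps (j k : Fin n) (hjk : j ≠ k) :
    ∑ x : Fin n → Bool, eps (x j) * eps (x k) = 0 := by
  have := sum_pair j (fun x => eps (x j) * eps (x k))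
  have h2 : ∑ x : Fin n → Bool,
      ((fun x => eps (x j) * eps (x k)) (Function.update x j true)
        + (fun x => eps (x j) * eps (x k)) (Function.update x j false)) = 0 := by
    refine Finset.sum_eq_zero (fun x _ => ?_)
    simp only [Function.update_self, Function.update_of_ne hjk.symm]
    rcases x k with _|_ <;> simp [eps]
  rw [h2] at this
  linarith

lemma sum_eps_sq (j : Fin n) :
    ∑ x : Fin n → Bool, eps (x j) * eps (x j) = 2 ^ n := by
  have : ∀ x : Fin n → Bool, eps (x j) * eps (x j) = 1 := by
    intro x; rcases x j with _|_ <;> simp [eps]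
  simp only [this, Finset.sum_const, nsmul_eq_mul, mul_one, Finset.card_univ]
  simp [Fintype.card_fun]


lemma d1_update_i (f : (Fin n → Bool) → ℝ) (i : Fin n) (x : Fin n → Bool) (b : Bool) :
    d1 f i (Function.update x i b) = d1 f i x := by
  simp [d1, Function.update_idem]

lemma d2_nonpos {f : (Fin n → Bool) → ℝ} (hf : Submodular f) (i j : Fin n)
    (x : Fin n → Bool) : d2 f i j x ≤ 0 := by
  rcases eq_or_ne i j with rfl | hij
  · simp [d2]
  · have key := hf (Function.update (Function.update x i true) j false)
      (Function.update (Function.update x i false) j true)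
    have hsup : (Function.update (Function.update x i true) j false)
        ⊔ (Function.update (Function.update x i false) j true)
        = Function.update (Function.update x i true) j true := by
      funext k
      rcases eq_or_ne k j with rfl | hkj
      · simp [Pi.sup_apply, Function.update_self]
      · rcases eq_or_ne k i with rfl | hki
        · simp [Pi.sup_apply, Function.update_of_ne hkj, Function.update_self]
        · simp [Pi.sup_apply, Function.update_of_ne hkj, Function.update_of_ne hki]
    have hinf : (Function.update (Function.update x i true) j false)
        ⊓ (Function.update (Function.update x i false) j true)
        = Function.update (Function.update x i false) j false := by
      funext k
      rcases eq_or_ne k j with rfl | hkj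
      · simp [Pi.inf_apply, Function.update_self]
      · rcases eq_or_ne k i with rfl | hki
        · simp [Pi.inf_apply, Function.update_of_ne hkj, Function.update_self]
        · simp [Pi.inf_apply, Function.update_of_ne hkj, Function.update_of_ne hki]
    rw [hsup, hinf] at key
    simp only [d2, if_neg hij]
    linarith

lemma d2_eq {f : (Fin n → Bool) → ℝ} {i j : Fin n} (hij : i ≠ j) (x : Fin n → Bool) :
    d2 f i j x = d1 f i (Function.update x j true) - d1 f i (Function.update x j false) := by
  simp only [d2, if_neg hij, d1]
  simp only [Function.update_comm (Ne.symm hij)]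
  ring

lemma l1_d2_eq (f : (Fin n → Bool) → ℝ) (hf : Submodular f) (i j : Fin n) :
    l1norm (d2 f i j) = 2 * EU (fun x => d1 f i x * eps (x j)) := by
  have habs : ∀ x, |d2 f i j x| = -(d2 f i j x) :=
    fun x => abs_of_nonpos (d2_nonpos hf i j x)
  rcases eq_or_ne i j with rfl | hij
  · have h1 : l1norm (d2 f i i) = 0 := by
      simp [l1norm, EU, d2]
    rw [h1, EU]
    have h2 : 2 * ∑ x : Fin n → Bool, d1 f i x * eps (x i) = 0 := by
      rw [sum_deriv i (d1 f i)]
      refine Finset.sum_eq_zero (fun x _ => ?_)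
      rw [d1_update_i, d1_update_i]; ring
    have h3 : (∑ x : Fin n → Bool, d1 f i x * eps (x i)) = 0 := by linarith
    rw [h3]; simp
  · unfold l1norm EU
    simp_rw [habs]
    have hsum : ∑ x : Fin n → Bool, -(d2 f i j x)
        = 2 * ∑ x : Fin n → Bool, d1 f i x * eps (x j) := by
      rw [sum_deriv j (d1 f i)]
      refine Finset.sum_congr rfl (fun x _ => ?_)
      rw [d2_eq hij]; ring
    rw [hsum]; ring

end Aux

end

/-- For a submodular f, coordinate i and A ⊆ [n],
Σ_{j∈A} ‖∂_{ij} f‖₁ ≤ 2 √|A| ‖∂_i f‖₂. -/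
theorem stmt4 {n : ℕ} (f : (Fin n → Bool) → ℝ) (hf : Submodular f)
    (i : Fin n) (A : Finset (Fin n)) :
    ∑ j ∈ A, l1norm (d2 f i j) ≤ 2 * Real.sqrt A.card * l2norm (d1 f i) := by
  classical
  set g := d1 f i with hg
  have hpow : (0:ℝ) < 2 ^ n := by positivity
  have hLHS : ∑ j ∈ A, l1norm (d2 f i j)
      = 2 * (∑ x : Fin n → Bool, g x * ∑ j ∈ A, Aux.eps (x j)) / 2 ^ n := by
    calc ∑ j ∈ A, l1norm (d2 f i j)
        = ∑ j ∈ A, 2 * EU (fun x => g x * Aux.eps (x j)) :=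
          Finset.sum_congr rfl (fun j _ => Aux.l1_d2_eq f hf i j)
      _ = 2 * ∑ j ∈ A, (∑ x : Fin n → Bool, g x * Aux.eps (x j)) / 2 ^ n := by
          rw [← Finset.mul_sum]; rfl
      _ = 2 * (∑ j ∈ A, ∑ x : Fin n → Bool, g x * Aux.eps (x j)) / 2 ^ n := by
          rw [← Finset.sum_div]; ring
      _ = 2 * (∑ x : Fin n → Bool, g x * ∑ j ∈ A, Aux.eps (x j)) / 2 ^ n := by
          rw [Finset.sum_comm]
          congr 2
          exact Finset.sum_congr rfl (fun x _ => by rw [Finset.mul_sum])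
  set hA : (Fin n → Bool) → ℝ := fun x => ∑ j ∈ A, Aux.eps (x j) with hhA
  have hS2 : ∑ x : Fin n → Bool, hA x ^ 2 = A.card * 2 ^ n := by
    have hexp : ∀ x : Fin n → Bool,
        hA x ^ 2 = ∑ j ∈ A, ∑ k ∈ A, Aux.eps (x j) * Aux.eps (x k) := by
      intro x; rw [sq, hhA, Finset.sum_mul_sum]
    simp_rw [hexp]
    rw [Finset.sum_comm]
    have hinner : ∀ j ∈ A,
        (∑ x : Fin n → Bool, ∑ k ∈ A, Aux.eps (x j) * Aux.eps (x k)) = 2 ^ n := by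
      intro j hj
      rw [Finset.sum_comm]
      rw [Finset.sum_eq_single_of_mem j hj
        (fun k _ hkj => Aux.sum_eps_eps j k (Ne.symm hkj))]
      exact Aux.sum_eps_sq j
    rw [Finset.sum_congr rfl hinner]
    simp [mul_comm]
  have hCS : (∑ x : Fin n → Bool, g x * hA x)
      ≤ Real.sqrt (∑ x : Fin n → Bool, g x ^ 2) * Real.sqrt (∑ x : Fin n → Bool, hA x ^ 2) := by
    have h1 := Finset.sum_mul_sq_le_sq_mul_sq Finset.univ g hA
    calc (∑ x : Fin n → Bool, g x * hA x)
        ≤ |∑ x : Fin n → Bool, g x * hA x| := le_abs_self _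
      _ = Real.sqrt ((∑ x : Fin n → Bool, g x * hA x) ^ 2) := (Real.sqrt_sq_eq_abs _).symm
      _ ≤ Real.sqrt ((∑ x : Fin n → Bool, g x ^ 2) * ∑ x : Fin n → Bool, hA x ^ 2) :=
          Real.sqrt_le_sqrt h1
      _ = _ := Real.sqrt_mul (Finset.sum_nonneg (fun x _ => sq_nonneg _)) _
  rw [hLHS]
  have hl2 : l2norm g = Real.sqrt (∑ x : Fin n → Bool, g x ^ 2) / Real.sqrt (2 ^ n) := by
    rw [l2norm, EU, Real.sqrt_div (Finset.sum_nonneg (fun x _ => sq_nonneg _))]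
  have hsqrt2n : Real.sqrt (2 ^ n) * Real.sqrt (2 ^ n) = 2 ^ n :=
    Real.mul_self_sqrt (le_of_lt hpow)
  rw [hl2]
  have hS2' : Real.sqrt (∑ x : Fin n → Bool, hA x ^ 2)
      = Real.sqrt A.card * Real.sqrt (2 ^ n) := by
    rw [hS2, Real.sqrt_mul (Nat.cast_nonneg _)]
  have hbound : ∑ x : Fin n → Bool, g x * hA x
      ≤ Real.sqrt (∑ x : Fin n → Bool, g x ^ 2) * (Real.sqrt A.card * Real.sqrt (2 ^ n)) := by
    rw [← hS2']; exact hCS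
  rw [div_le_iff₀ hpow]
  have h2n : Real.sqrt ((2:ℝ) ^ n) ≠ 0 := by positivity
  have key : 2 * Real.sqrt A.card
        * (Real.sqrt (∑ x : Fin n → Bool, g x ^ 2) / Real.sqrt (2 ^ n)) * 2 ^ n
      = 2 * (Real.sqrt (∑ x : Fin n → Bool, g x ^ 2)
        * (Real.sqrt A.card * Real.sqrt (2 ^ n))) := by
    field_simp
    linear_combination (-(Real.sqrt (A.card : ℝ)
      * Real.sqrt (∑ x : Fin n → Bool, g x ^ 2))) * hsqrt2n
  rw [key]
  linarith
end

section
/- For any totally symmetric submodular function f : {0,1}^n → [0,1] and any x ∈ {0,1}^n with n/3 ≤ Σ_{i=1}^n x_i ≤ 2n/3, one has |∂_i f(x)| ≤ 3/n for all i ∈ [n]. -/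
open Finset

/-- Hamming weight of a point of the cube. -/
def wt {n : ℕ} (x : Fin n → Bool) : ℕ := ∑ i, (x i).toNat


lemma wt_decide {n : ℕ} (P : ℕ → Prop) [DecidablePred P] :
    wt (fun i : Fin n => decide (P i.val)) = ((Finset.range n).filter P).card := by
  unfold wt
  rw [Finset.card_filter, ← Fin.sum_univ_eq_sum_range]
  refine Finset.sum_congr rfl fun i _ => ?_
  by_cases h : P i.val <;> simp [h]

lemma wt_le {n : ℕ} (x : Fin n → Bool) : wt x ≤ n := by
  unfold wt
  calc ∑ i, (x i).toNat ≤ ∑ _i : Fin n, 1 :=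
        Finset.sum_le_sum fun i _ => Bool.toNat_le _
    _ = n := by simp

lemma wt_update {n : ℕ} (x : Fin n → Bool) (i : Fin n) (b : Bool) :
    wt (Function.update x i b) = b.toNat + ∑ j ∈ (Finset.univ \ {i}), (x j).toNat := by
  unfold wt
  have : (fun j => (Function.update x i b j).toNat)
      = Function.update (fun j => (x j).toNat) i b.toNat := by
    funext j
    by_cases h : j = i <;> simp [Function.update, h]
  calc ∑ j, (Function.update x i b j).toNat
      = ∑ j, Function.update (fun j => (x j).toNat) i b.toNat j := by rw [this]
    _ = b.toNat + ∑ j ∈ (Finset.univ \ {i}), (x j).toNat :=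
        Finset.sum_update_of_mem (Finset.mem_univ i) _ _

/-- For a totally symmetric submodular f : {0,1}^n → [0,1] and x with
n/3 ≤ Σ x_i ≤ 2n/3, we have |∂_i f(x)| ≤ 3/n for all i. -/
theorem stmt5 {n : ℕ} (f : (Fin n → Bool) → ℝ) (hf : Submodular f)
    (hsym : ∀ x y, wt x = wt y → f x = f y)
    (hrange : ∀ x, f x ∈ Set.Icc (0 : ℝ) 1)
    (x : Fin n → Bool) (hx1 : (n : ℝ) / 3 ≤ (wt x : ℝ)) (hx2 : (wt x : ℝ) ≤ 2 * n / 3) :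
    ∀ i : Fin n, |d1 f i x| ≤ 3 / n := by
  intro i
  have hn : 0 < n := i.pos
  have hnR : (0:ℝ) < n := by exact_mod_cast hn
  set g : ℕ → ℝ := fun k => f (fun j : Fin n => decide (j.val < k)) with hgdef
  have wtpt : ∀ k, k ≤ n → wt (fun j : Fin n => decide (j.val < k)) = k := by
    intro k hk
    have h : (Finset.range n).filter (fun a => a < k) = Finset.range k := by
      ext a; simp only [Finset.mem_filter, Finset.mem_range]; omega
    calc wt (fun j : Fin n => decide (j.val < k))
        = ((Finset.range n).filter (fun a => a < k)).card := wt_decide (fun a => a < k)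
      _ = k := by rw [h, Finset.card_range]
  have hfg : ∀ y : Fin n → Bool, f y = g (wt y) := fun y =>
    hsym y _ (wtpt (wt y) (wt_le y)).symm
  have hg01 : ∀ k, g k ∈ Set.Icc (0:ℝ) 1 := fun k => hrange _
  have hconc : ∀ k, k + 2 ≤ n → g (k+2) + g k ≤ g (k+1) + g (k+1) := by
    intro k hk
    have h := hf (fun j : Fin n => decide (j.val < k+1))
      (fun j : Fin n => decide (1 ≤ j.val ∧ j.val < k+2))
    have hsup : ((fun j : Fin n => decide (j.val < k+1)) ⊔
          fun j : Fin n => decide (1 ≤ j.val ∧ j.val < k+2))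
        = fun j : Fin n => decide (j.val < k + 2) := by
      funext j
      show (decide (j.val < k+1) || decide (1 ≤ j.val ∧ j.val < k+2)) = _
      rw [← Bool.decide_or]; exact decide_eq_decide.mpr (by omega)
    have hinf : ((fun j : Fin n => decide (j.val < k+1)) ⊓
          fun j : Fin n => decide (1 ≤ j.val ∧ j.val < k+2))
        = fun j : Fin n => decide (1 ≤ j.val ∧ j.val < k + 1) := by
      funext j
      show (decide (j.val < k+1) && decide (1 ≤ j.val ∧ j.val < k+2)) = _
      rw [← Bool.decide_and]; exact decide_eq_decide.mpr (by omega)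
    have w1 : wt (fun j : Fin n => decide (1 ≤ j.val ∧ j.val < k+1)) = k := by
      have h2 : (Finset.range n).filter (fun a => 1 ≤ a ∧ a < k+1)
          = Finset.Ico 1 (k+1) := by
        ext a; simp only [Finset.mem_filter, Finset.mem_range, Finset.mem_Ico]; omega
      calc wt (fun j : Fin n => decide (1 ≤ j.val ∧ j.val < k+1))
          = ((Finset.range n).filter (fun a => 1 ≤ a ∧ a < k+1)).card :=
            wt_decide (fun a => 1 ≤ a ∧ a < k+1)
        _ = k := by rw [h2, Nat.card_Ico]; omega
    have w2 : wt (fun j : Fin n => decide (1 ≤ j.val ∧ j.val < k+2)) = k + 1 := by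
      have h2 : (Finset.range n).filter (fun a => 1 ≤ a ∧ a < k+2)
          = Finset.Ico 1 (k+2) := by
        ext a; simp only [Finset.mem_filter, Finset.mem_range, Finset.mem_Ico]; omega
      calc wt (fun j : Fin n => decide (1 ≤ j.val ∧ j.val < k+2))
          = ((Finset.range n).filter (fun a => 1 ≤ a ∧ a < k+2)).card :=
            wt_decide (fun a => 1 ≤ a ∧ a < k+2)
        _ = k + 1 := by rw [h2, Nat.card_Ico]; omega
    rw [hsup, hinf, hfg, hfg, hfg, hfg, wtpt (k+2) hk, w1, wtpt (k+1) (by omega), w2] at h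
    linarith
  have hDmono : ∀ j k : ℕ, j ≤ k → k + 1 ≤ n → g (k+1) - g k ≤ g (j+1) - g j := by
    intro j k hjk
    induction hjk with
    | refl => intro _; exact le_rfl
    | @step p h ih =>
      intro hkn
      have h1 := hconc p (by omega)
      have h2 := ih (by omega)
      linarith
  set m := wt (Function.update x i false) with hm
  have hmt : wt (Function.update x i true) = m + 1 := by
    rw [hm, wt_update, wt_update]
    simp only [Bool.toNat_true, Bool.toNat_false]
    omega
  have hmn : m + 1 ≤ n := by
    have h1 : m = ∑ j ∈ (Finset.univ \ {i}), (x j).toNat := by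
      rw [hm, wt_update]; simp
    have h2 : ∑ j ∈ (Finset.univ \ {i}), (x j).toNat
        ≤ ∑ _j ∈ (Finset.univ \ {i}), 1 :=
      Finset.sum_le_sum fun j _ => Bool.toNat_le _
    have h3 : ∑ _j ∈ (Finset.univ \ {i}), (1:ℕ) = n - 1 := by
      simp [Finset.card_sdiff_of_subset, Finset.card_univ]
    omega
  have hmwt : m ≤ wt x ∧ wt x ≤ m + 1 := by
    cases hxi : x i with
    | false =>
      have h : Function.update x i false = x := by
        rw [← hxi]; exact Function.update_eq_self i x
      rw [hm, h]
      omega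
    | true =>
      have h : Function.update x i true = x := by
        rw [← hxi]; exact Function.update_eq_self i x
      rw [h] at hmt
      omega
  have hc1 : (m:ℝ) ≤ (wt x : ℝ) := by exact_mod_cast hmwt.1
  have hc2 : (wt x : ℝ) ≤ (m:ℝ) + 1 := by exact_mod_cast hmwt.2
  have hd : d1 f i x = g (m+1) - g m := by
    simp only [d1]
    rw [hfg, hfg, hmt, ← hm]
  have hup : g (m+1) - g m ≤ 3 / n := by
    have hsum : ∑ j ∈ Finset.range (m+1), (g (j+1) - g j) = g (m+1) - g 0 :=
      Finset.sum_range_sub g (m+1)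
    have hterm : ∀ j ∈ Finset.range (m+1), g (m+1) - g m ≤ g (j+1) - g j := by
      intro j hj
      exact hDmono j m (Nat.lt_succ_iff.mp (Finset.mem_range.mp hj)) hmn
    have hle : ((m:ℝ)+1) * (g (m+1) - g m) ≤ g (m+1) - g 0 := by
      rw [← hsum]
      calc ((m:ℝ)+1) * (g (m+1) - g m)
          = ∑ _j ∈ Finset.range (m+1), (g (m+1) - g m) := by
            rw [Finset.sum_const, Finset.card_range, nsmul_eq_mul]
            push_cast; ring
        _ ≤ _ := Finset.sum_le_sum hterm
    have h1 : ((m:ℝ)+1) * (g (m+1) - g m) ≤ 1 := by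
      have := hg01 (m+1); have := hg01 0
      simp only [Set.mem_Icc] at *
      linarith
    have h2 : (n:ℝ)/3 ≤ (m:ℝ)+1 := by linarith
    rw [le_div_iff₀ hnR]
    rcases le_or_gt 0 (g (m+1) - g m) with hD | hD
    · nlinarith [mul_nonneg hD (show (0:ℝ) ≤ 3*((m:ℝ)+1) - n by linarith)]
    · nlinarith [mul_nonpos_of_nonpos_of_nonneg hD.le hnR.le]
  have hlo : -(3 / n) ≤ g (m+1) - g m := by
    have hsum := Finset.sum_range_sub (fun t => g (m + t)) (n - m)
    simp only [Nat.add_zero] at hsum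
    rw [show m + (n - m) = n from by omega] at hsum
    have hterm : ∀ t ∈ Finset.range (n - m), g (m + (t+1)) - g (m + t) ≤ g (m+1) - g m := by
      intro t ht
      have ht' := Finset.mem_range.mp ht
      exact hDmono m (m + t) (Nat.le_add_right _ _) (by omega)
    have hle : g n - g m ≤ ((n:ℝ) - m) * (g (m+1) - g m) := by
      rw [← hsum]
      calc ∑ t ∈ Finset.range (n-m), (g (m+(t+1)) - g (m+t))
          ≤ ∑ _t ∈ Finset.range (n-m), (g (m+1) - g m) := Finset.sum_le_sum hterm
        _ = ((n - m : ℕ):ℝ) * (g (m+1) - g m) := by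
            rw [Finset.sum_const, Finset.card_range, nsmul_eq_mul]
        _ = ((n:ℝ) - m) * (g (m+1) - g m) := by
            rw [Nat.cast_sub (show m ≤ n by omega)]
    have h1 : (-1:ℝ) ≤ ((n:ℝ) - m) * (g (m+1) - g m) := by
      have := hg01 n; have := hg01 m
      simp only [Set.mem_Icc] at *
      linarith
    have h2 : (n:ℝ)/3 ≤ (n:ℝ) - m := by linarith
    rw [neg_le, le_div_iff₀ hnR]
    rcases le_or_gt 0 (-(g (m+1) - g m)) with hD | hD
    · nlinarith [mul_nonneg hD (show (0:ℝ) ≤ 3*((n:ℝ)-m) - n by linarith)]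
    · nlinarith [mul_nonpos_of_nonpos_of_nonneg hD.le hnR.le]
  rw [hd, abs_le]
  exact ⟨hlo, hup⟩
end

section
/- Let f : {0,1}^n → [0,1] be a submodular function and c > 0 a constant such that |∂_i f(x)| ≤ c/n for all i ∈ [n] and all x ∈ {0,1}^n. Then Σ_{i=1}^n Σ_{j=1}^n ‖∂_{ij} f‖₂² ≤ 4c²/√n. -/
open Finset

namespace Stmt6Aux
noncomputable section
variable {n : ℕ}

def flip (j : Fin n) (x : Fin n → Bool) : Fin n → Bool := Function.update x j (!x j)

def eps (j : Fin n) (x : Fin n → Bool) : ℝ := if x j then -1 else 1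

lemma flip_invol (j : Fin n) : Function.Involutive (flip j) := by
  intro x
  funext k
  by_cases h : k = j
  · subst h; simp [flip]
  · simp [flip, Function.update_apply, h]

lemma sum_flip (j : Fin n) (F : (Fin n → Bool) → ℝ) :
    ∑ x, F (flip j x) = ∑ x, F x :=
  Fintype.sum_bijective (flip j) (flip_invol j).bijective _ _ (fun _ => rfl)

lemma eps_flip_self (j : Fin n) (x : Fin n → Bool) : eps j (flip j x) = -eps j x := by
  cases h : x j <;> simp [eps, flip, h]

lemma eps_flip_ne {j k : Fin n} (h : k ≠ j) (x : Fin n → Bool) :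
    eps k (flip j x) = eps k x := by
  simp [eps, flip, Function.update_apply, h]

lemma eps_orth {j k : Fin n} (h : j ≠ k) :
    ∑ x : Fin n → Bool, eps j x * eps k x = 0 := by
  have h1 := sum_flip j (fun x => eps j x * eps k x)
  have h2 : ∀ x : Fin n → Bool, eps j (flip j x) * eps k (flip j x)
      = -(eps j x * eps k x) := by
    intro x
    rw [eps_flip_self, eps_flip_ne h.symm]
    ring
  rw [Finset.sum_congr rfl (fun x _ => h2 x), Finset.sum_neg_distrib] at h1
  linarith

lemma eps_sq (j : Fin n) (x : Fin n → Bool) : eps j x * eps j x = 1 := by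
  cases h : x j <;> simp [eps, h]

lemma sum_eps_mul (j k : Fin n) :
    ∑ x : Fin n → Bool, eps j x * eps k x = if j = k then (2:ℝ)^n else 0 := by
  by_cases h : j = k
  · subst h
    simp [eps_sq, Finset.card_univ]
  · simp [h, eps_orth h]

lemma sum_diff_eq (j : Fin n) (g : (Fin n → Bool) → ℝ) :
    ∑ x : Fin n → Bool, (g (Function.update x j false) - g (Function.update x j true))
      = 2 * ∑ x : Fin n → Bool, g x * eps j x := by
  have h1 := sum_flip j (fun x => g x * eps j x)
  have key : ∀ x : Fin n → Bool,
      g x * eps j x + g (flip j x) * eps j (flip j x)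
        = g (Function.update x j false) - g (Function.update x j true) := by
    intro x
    rw [eps_flip_self]
    cases h : x j
    · have hx : Function.update x j false = x := by
        conv_rhs => rw [← Function.update_eq_self j x]
        rw [h]
      have hf : flip j x = Function.update x j true := by
        simp [flip, h]
      rw [hx, hf]
      simp [eps, h]
      ring
    · have hx : Function.update x j true = x := by
        conv_rhs => rw [← Function.update_eq_self j x]
        rw [h]
      have hf : flip j x = Function.update x j false := by
        simp [flip, h]
      rw [hx, hf]
      simp [eps, h]
      ring
  calc ∑ x : Fin n → Bool, (g (Function.update x j false) - g (Function.update x j true))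
      = ∑ x : Fin n → Bool, (g x * eps j x + g (flip j x) * eps j (flip j x)) :=
        Finset.sum_congr rfl (fun x _ => (key x).symm)
    _ = ∑ x : Fin n → Bool, g x * eps j x
        + ∑ x : Fin n → Bool, g (flip j x) * eps j (flip j x) := Finset.sum_add_distrib
    _ = 2 * ∑ x : Fin n → Bool, g x * eps j x := by rw [h1]; ring

lemma d2_eq_diff {f : (Fin n → Bool) → ℝ} {i j : Fin n} (hij : i ≠ j) (x : Fin n → Bool) :
    d2 f i j x = d1 f i (Function.update x j true) - d1 f i (Function.update x j false) := by
  simp only [d2, d1, if_neg hij, Function.update_comm hij]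
  ring

lemma d2_nonpos {f : (Fin n → Bool) → ℝ} (hf : Submodular f) {i j : Fin n} (hij : i ≠ j)
    (x : Fin n → Bool) : d2 f i j x ≤ 0 := by
  have h := hf (Function.update (Function.update x i true) j false)
    (Function.update (Function.update x i false) j true)
  have hsup : Function.update (Function.update x i true) j false ⊔
      Function.update (Function.update x i false) j true
      = Function.update (Function.update x i true) j true := by
    funext k
    simp only [Pi.sup_apply, Function.update_apply]
    by_cases hkj : k = j <;> by_cases hki : k = i
    · exact absurd (hki ▸ hkj : i = j) hij
    · simp [hkj, hki]
    · simp [hkj, hki]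
    · simp [hkj, hki]
  have hinf : Function.update (Function.update x i true) j false ⊓
      Function.update (Function.update x i false) j true
      = Function.update (Function.update x i false) j false := by
    funext k
    simp only [Pi.inf_apply, Function.update_apply]
    by_cases hkj : k = j <;> by_cases hki : k = i
    · exact absurd (hki ▸ hkj : i = j) hij
    · simp [hkj, hki]
    · simp [hkj, hki]
    · simp [hkj, hki]
  rw [hsup, hinf] at h
  simp only [d2, if_neg hij]
  linarith

end
end Stmt6Aux

open Stmt6Aux in
/-- If f : {0,1}^n → [0,1] is submodular and |∂_i f(x)| ≤ c/n for all i, x,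
then Σ_{i,j} ‖∂_{ij} f‖₂² ≤ 4c²/√n. -/
theorem stmt6 {n : ℕ} (f : (Fin n → Bool) → ℝ) (hf : Submodular f)
    (hrange : ∀ x, f x ∈ Set.Icc (0 : ℝ) 1) (c : ℝ) (hc : 0 < c)
    (hder : ∀ (i : Fin n) (x : Fin n → Bool), |d1 f i x| ≤ c / n) :
    ∑ i : Fin n, ∑ j : Fin n, l2norm (d2 f i j) ^ 2 ≤ 4 * c ^ 2 / Real.sqrt n := by
  rcases Nat.eq_zero_or_pos n with hn0 | hnpos
  · subst hn0
    simp
  have hN : (0:ℝ) < n := by exact_mod_cast hnpos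
  have hs : (0:ℝ) < Real.sqrt n := Real.sqrt_pos.mpr hN
  have hss : Real.sqrt n * Real.sqrt n = (n:ℝ) := Real.mul_self_sqrt hN.le
  set α : ℝ := c / n with hα
  have hα0 : 0 < α := div_pos hc hN
  have h2p : (0:ℝ) < 2 ^ n := by positivity
  -- inner bound
  have inner : ∀ i : Fin n,
      ∑ j : Fin n, (∑ x : Fin n → Bool, d2 f i j x ^ 2)
        ≤ 4 * α ^ 2 * Real.sqrt n * 2 ^ n := by
    intro i
    set g : (Fin n → Bool) → ℝ := d1 f i with hg
    set s : Finset (Fin n) := Finset.univ.erase i with hsdef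
    have hsplit : ∑ j : Fin n, (∑ x : Fin n → Bool, d2 f i j x ^ 2)
        = (∑ x : Fin n → Bool, d2 f i i x ^ 2)
          + ∑ j ∈ s, (∑ x : Fin n → Bool, d2 f i j x ^ 2) :=
      (Finset.add_sum_erase _ _ (Finset.mem_univ i)).symm
    have hii : (∑ x : Fin n → Bool, d2 f i i x ^ 2) = 0 := by
      simp [d2]
    -- per j bound
    have hj : ∀ j ∈ s, (∑ x : Fin n → Bool, d2 f i j x ^ 2)
        ≤ 4 * α * ∑ x : Fin n → Bool, g x * eps j x := by
      intro j hjs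
      have hij : i ≠ j := (Finset.ne_of_mem_erase hjs).symm
      have habs : ∀ x, |d2 f i j x| ≤ 2 * α := by
        intro x
        rw [d2_eq_diff hij x]
        calc |d1 f i (Function.update x j true) - d1 f i (Function.update x j false)|
            ≤ |d1 f i (Function.update x j true)| + |d1 f i (Function.update x j false)| :=
              abs_sub _ _
          _ ≤ α + α := add_le_add (hder i _) (hder i _)
          _ = 2 * α := by ring
      have hpt : ∀ x, d2 f i j x ^ 2 ≤ 2 * α * (-(d2 f i j x)) := by
        intro x
        have h1 := d2_nonpos hf hij x
        have h2 := habs x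
        rw [abs_of_nonpos h1] at h2
        nlinarith
      calc (∑ x : Fin n → Bool, d2 f i j x ^ 2)
          ≤ ∑ x : Fin n → Bool, 2 * α * (-(d2 f i j x)) :=
            Finset.sum_le_sum (fun x _ => hpt x)
        _ = 2 * α * ∑ x : Fin n → Bool,
            (g (Function.update x j false) - g (Function.update x j true)) := by
            rw [← Finset.mul_sum]
            congr 1
            refine Finset.sum_congr rfl (fun x _ => ?_)
            rw [d2_eq_diff hij x]
            ring
        _ = 2 * α * (2 * ∑ x : Fin n → Bool, g x * eps j x) := by
            rw [sum_diff_eq]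
        _ = 4 * α * ∑ x : Fin n → Bool, g x * eps j x := by ring
    -- Cauchy-Schwarz bound on T
    set T : ℝ := ∑ j ∈ s, ∑ x : Fin n → Bool, g x * eps j x with hT
    have hTswap : T = ∑ x : Fin n → Bool, g x * (∑ j ∈ s, eps j x) := by
      rw [hT, Finset.sum_comm]
      simp_rw [Finset.mul_sum]
    have hB : ∑ x : Fin n → Bool, (∑ j ∈ s, eps j x) ^ 2 = (s.card : ℝ) * 2 ^ n := by
      have : ∀ x : Fin n → Bool, (∑ j ∈ s, eps j x) ^ 2
          = ∑ j ∈ s, ∑ k ∈ s, eps j x * eps k x := by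
        intro x
        rw [sq, Finset.sum_mul_sum]
      rw [Finset.sum_congr rfl (fun x _ => this x), Finset.sum_comm]
      have : ∀ j ∈ s, ∑ x : Fin n → Bool, ∑ k ∈ s, eps j x * eps k x = (2:ℝ)^n := by
        intro j hjs
        rw [Finset.sum_comm]
        have : ∀ k ∈ s, ∑ x : Fin n → Bool, eps j x * eps k x
            = if j = k then (2:ℝ)^n else 0 := fun k _ => sum_eps_mul j k
        rw [Finset.sum_congr rfl this, Finset.sum_ite_eq]
        simp [hjs]
      rw [Finset.sum_congr rfl this, Finset.sum_const, nsmul_eq_mul]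
    have hg2 : ∑ x : Fin n → Bool, g x ^ 2 ≤ 2 ^ n * α ^ 2 := by
      have : ∀ x : Fin n → Bool, g x ^ 2 ≤ α ^ 2 := by
        intro x
        have := hder i x
        nlinarith [abs_nonneg (d1 f i x), sq_abs (d1 f i x)]
      calc ∑ x : Fin n → Bool, g x ^ 2 ≤ ∑ x : Fin n → Bool, α ^ 2 :=
            Finset.sum_le_sum (fun x _ => this x)
        _ = 2 ^ n * α ^ 2 := by
            rw [Finset.sum_const, nsmul_eq_mul]
            simp [Finset.card_univ]
    have hcard : (s.card : ℝ) ≤ n := by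
      have : s.card ≤ n := by
        calc s.card ≤ (Finset.univ : Finset (Fin n)).card := Finset.card_le_card (Finset.erase_subset _ _)
          _ = n := by simp
      exact_mod_cast this
    have hT2 : T ^ 2 ≤ (α * 2 ^ n * Real.sqrt n) ^ 2 := by
      rw [hTswap]
      calc (∑ x : Fin n → Bool, g x * (∑ j ∈ s, eps j x)) ^ 2
          ≤ (∑ x : Fin n → Bool, g x ^ 2) * ∑ x : Fin n → Bool, (∑ j ∈ s, eps j x) ^ 2 :=
            Finset.sum_mul_sq_le_sq_mul_sq _ _ _
        _ ≤ (2 ^ n * α ^ 2) * ((n : ℝ) * 2 ^ n) := by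
            apply mul_le_mul hg2 ?_ ?_ (by positivity)
            · rw [hB]
              exact mul_le_mul_of_nonneg_right hcard h2p.le
            · rw [hB]; positivity
        _ = (α * 2 ^ n * Real.sqrt n) ^ 2 := by
            rw [mul_pow, mul_pow, sq (Real.sqrt (n:ℝ)), hss]
            ring
    have hTle : T ≤ α * 2 ^ n * Real.sqrt n := by
      have hB0 : (0:ℝ) ≤ α * 2 ^ n * Real.sqrt n := by positivity
      calc T ≤ |T| := le_abs_self T
        _ = Real.sqrt (T ^ 2) := (Real.sqrt_sq_eq_abs T).symm
        _ ≤ Real.sqrt ((α * 2 ^ n * Real.sqrt n) ^ 2) := Real.sqrt_le_sqrt hT2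
        _ = α * 2 ^ n * Real.sqrt n := Real.sqrt_sq hB0
    have hlast : ∑ j ∈ s, (∑ x : Fin n → Bool, d2 f i j x ^ 2) ≤ 4 * α * T := by
      rw [hT]
      calc ∑ j ∈ s, (∑ x : Fin n → Bool, d2 f i j x ^ 2)
          ≤ ∑ j ∈ s, 4 * α * ∑ x : Fin n → Bool, g x * eps j x :=
            Finset.sum_le_sum hj
        _ = 4 * α * ∑ j ∈ s, ∑ x : Fin n → Bool, g x * eps j x := by
            rw [Finset.mul_sum]
    have hmul : 4 * α * T ≤ 4 * α * (α * 2 ^ n * Real.sqrt n) :=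
      mul_le_mul_of_nonneg_left hTle (by positivity)
    rw [hsplit, hii, zero_add]
    calc ∑ j ∈ s, (∑ x : Fin n → Bool, d2 f i j x ^ 2)
        ≤ 4 * α * T := hlast
      _ ≤ 4 * α * (α * 2 ^ n * Real.sqrt n) := hmul
      _ = 4 * α ^ 2 * Real.sqrt n * 2 ^ n := by ring
  -- assemble
  have hl2 : ∀ (i j : Fin n), l2norm (d2 f i j) ^ 2
      = (∑ x : Fin n → Bool, d2 f i j x ^ 2) / 2 ^ n := by
    intro i j
    rw [l2norm, Real.sq_sqrt]
    · rfl
    · have : EU (fun x => d2 f i j x ^ 2) = (∑ x : Fin n → Bool, d2 f i j x ^ 2) / 2 ^ n := rfl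
      rw [this]
      positivity
  calc ∑ i : Fin n, ∑ j : Fin n, l2norm (d2 f i j) ^ 2
      = ∑ i : Fin n, (∑ j : Fin n, (∑ x : Fin n → Bool, d2 f i j x ^ 2)) / 2 ^ n := by
        refine Finset.sum_congr rfl (fun i _ => ?_)
        rw [Finset.sum_div]
        exact Finset.sum_congr rfl (fun j _ => hl2 i j)
    _ ≤ ∑ i : Fin n, (4 * α ^ 2 * Real.sqrt n * 2 ^ n) / 2 ^ n := by
        refine Finset.sum_le_sum (fun i _ => ?_)
        gcongr
        exact inner i
    _ = (n : ℝ) * (4 * α ^ 2 * Real.sqrt n) := by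
        rw [Finset.sum_const, Finset.card_univ, Fintype.card_fin, nsmul_eq_mul]
        congr 1
        field_simp
    _ = 4 * c ^ 2 / Real.sqrt n := by
        rw [hα]
        field_simp
        linear_combination hss
end

section
/- Let f : {0,1}^n → [0,1] be a submodular function and let 0 < δ, ε < 1. Define J(ε,δ) = { i ∈ [n] : Pr_{x∼U}[ |∂_i f(x)| ≥ ε ] ≥ δ }. Then |J(ε,δ)| ≤ (8/ε) · log₂(2/δ). -/
open Finset

namespace SM7

open Finset

noncomputable section

variable {n : ℕ} {f : (Fin n → Bool) → ℝ}

/-! ### Submodularity combinatorics -/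

lemma d1_update_self (i : Fin n) (x : Fin n → Bool) (b : Bool) :
    d1 f i (Function.update x i b) = d1 f i x := by
  simp [d1, Function.update_idem]

lemma submod_pair (hf : Submodular f) {i j : Fin n} (hij : i ≠ j) (z : Fin n → Bool) :
    f (Function.update (Function.update z j true) i true)
      + f (Function.update (Function.update z j false) i false)
    ≤ f (Function.update (Function.update z j false) i true)
      + f (Function.update (Function.update z j true) i false) := by
  have h := hf (Function.update (Function.update z j false) i true)
    (Function.update (Function.update z j true) i false)
  have hsup : (Function.update (Function.update z j false) i true)
      ⊔ (Function.update (Function.update z j true) i false)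
      = Function.update (Function.update z j true) i true := by
    funext k
    rcases eq_or_ne k i with rfl | hki
    · simp [Function.update_of_ne (Ne.symm hij), Pi.sup_apply]
    · rcases eq_or_ne k j with rfl | hkj
      · simp [Function.update_of_ne hki, Pi.sup_apply]
      · simp [Function.update_of_ne hki, Function.update_of_ne hkj, Pi.sup_apply]
  have hinf : (Function.update (Function.update z j false) i true)
      ⊓ (Function.update (Function.update z j true) i false)
      = Function.update (Function.update z j false) i false := by
    funext k
    rcases eq_or_ne k i with rfl | hki
    · simp [Function.update_of_ne (Ne.symm hij), Pi.inf_apply]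
    · rcases eq_or_ne k j with rfl | hkj
      · simp [Function.update_of_ne hki, Pi.inf_apply]
      · simp [Function.update_of_ne hki, Function.update_of_ne hkj, Pi.inf_apply]
  rw [hsup, hinf] at h
  linarith

lemma d1_update_true_le (hf : Submodular f) (i j : Fin n) (x : Fin n → Bool) :
    d1 f i (Function.update x j true) ≤ d1 f i x := by
  rcases eq_or_ne i j with rfl | hij
  · rw [d1_update_self]
  · rcases Bool.eq_false_or_eq_true (x j) with hx | hx
    · have : Function.update x j true = x := by
        rw [← hx]; exact Function.update_eq_self j x
      rw [this]
    · have hxx : Function.update x j false = x := by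
        rw [← hx]; exact Function.update_eq_self j x
      have h := submod_pair hf hij x
      rw [hxx] at h
      simp only [d1]
      linarith

lemma d1_update_false_ge (hf : Submodular f) (i j : Fin n) (x : Fin n → Bool) :
    d1 f i x ≤ d1 f i (Function.update x j false) := by
  rcases Bool.eq_false_or_eq_true (x j) with hx | hx
  · have h := d1_update_true_le hf i j (Function.update x j false)
    rwa [Function.update_idem, ← hx, Function.update_eq_self] at h
  · have : Function.update x j false = x := by rw [← hx]; exact Function.update_eq_self j x
    rw [this]

/-- zero out the coordinates in S -/
def zeroOn {n : ℕ} (S : Finset (Fin n)) (x : Fin n → Bool) : Fin n → Bool :=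
  fun j => if j ∈ S then false else x j

lemma zeroOn_insert (S : Finset (Fin n)) (i : Fin n) (x : Fin n → Bool) :
    zeroOn (insert i S) x = Function.update (zeroOn S x) i false := by
  funext k
  rcases eq_or_ne k i with rfl | hki
  · simp [zeroOn]
  · simp [zeroOn, Function.update_of_ne hki, hki]

lemma d1_le_zeroOn (hf : Submodular f) (i : Fin n) (S : Finset (Fin n)) (x : Fin n → Bool) :
    d1 f i x ≤ d1 f i (zeroOn S x) := by
  classical
  induction S using Finset.induction_on with
  | empty =>
    have : zeroOn (∅ : Finset (Fin n)) x = x := by funext k; simp [zeroOn]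
    rw [this]
  | insert _ _ hnotmem _ =>
    rename_i j S ih
    rw [zeroOn_insert]
    exact le_trans ih (d1_update_false_ge hf i j _)

lemma d1_antitone (hf : Submodular f) (i : Fin n) {x y : Fin n → Bool} (hxy : x ≤ y) :
    d1 f i y ≤ d1 f i x := by
  classical
  have hx : x = zeroOn (univ.filter (fun j => y j = true ∧ x j = false)) y := by
    funext j
    by_cases hj : y j = true ∧ x j = false
    · simp [zeroOn, hj, hj.2]
    · simp only [zeroOn, mem_filter, mem_univ, true_and, hj, if_false]
      have hle : x j ≤ y j := hxy j
      rcases Bool.eq_false_or_eq_true (x j) with h1 | h1 <;>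
        rcases Bool.eq_false_or_eq_true (y j) with h2 | h2
      · rw [h1, h2]
      · rw [h1] at hle; rw [h2] at hle; exact absurd hle (by decide)
      · exact absurd ⟨h2, h1⟩ hj
      · rw [h1, h2]
  rw [hx]
  exact d1_le_zeroOn hf i _ y

lemma chain_bound (hf : Submodular f) (ε : ℝ) (x : Fin n → Bool) (S : Finset (Fin n))
    (hS1 : ∀ i ∈ S, x i = true) (hS2 : ∀ i ∈ S, ε ≤ d1 f i x) :
    f (zeroOn S x) + ε * S.card ≤ f x := by
  classical
  induction S using Finset.induction_on with
  | empty =>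
    have : zeroOn (∅ : Finset (Fin n)) x = x := by funext k; simp [zeroOn]
    rw [this]; simp
  | insert _ _ hnotmem _ =>
    rename_i i S ih
    have ih' := ih (fun j hj => hS1 j (mem_insert_of_mem hj))
      (fun j hj => hS2 j (mem_insert_of_mem hj))
    rw [zeroOn_insert]
    have hyi : zeroOn S x i = true := by simp [zeroOn, hnotmem, hS1 i (mem_insert_self i S)]
    have hd : ε ≤ d1 f i (zeroOn S x) :=
      le_trans (hS2 i (mem_insert_self i S)) (d1_le_zeroOn hf i S x)
    have hupd : Function.update (zeroOn S x) i true = zeroOn S x := by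
      rw [← hyi]; exact Function.update_eq_self i _
    have hstep : f (Function.update (zeroOn S x) i false) + ε ≤ f (zeroOn S x) := by
      have := hd
      simp only [d1, hupd] at this
      linarith
    rw [Finset.card_insert_of_notMem hnotmem]
    push_cast
    linarith

/-! ### Biased product measures on the cube -/

/-- weight of one bit; `q` is the probability of `false`. -/
def wt (q : ℝ) (b : Bool) : ℝ := if b then 1 - q else q

/-- product weight -/
def W (q : ℝ) (x : Fin n → Bool) : ℝ := ∏ i, wt q (x i)

lemma wt_nonneg {q : ℝ} (h0 : 0 ≤ q) (h1 : q ≤ 1) (b : Bool) : 0 ≤ wt q b := by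
  cases b <;> simp [wt] <;> linarith

lemma W_nonneg {q : ℝ} (h0 : 0 ≤ q) (h1 : q ≤ 1) (x : Fin n → Bool) : 0 ≤ W q x :=
  Finset.prod_nonneg fun i _ => wt_nonneg h0 h1 _

lemma sum_prod_eq' {κ : Type*} [Fintype κ] {v : Fin n → κ → ℝ} :
    ∑ x : Fin n → κ, ∏ i, v i (x i) = ∏ i, (∑ b, v i b) := by
  classical
  rw [Finset.prod_univ_sum (fun _ => (univ : Finset κ)) v, Fintype.piFinset_univ]

lemma sum_W (q : ℝ) : ∑ x : Fin n → Bool, W q x = 1 := by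
  have h : ∑ x : Fin n → Bool, W q x = ∏ i : Fin n, (∑ b, wt q b) := sum_prod_eq'
  rw [h]
  have : (∑ b, wt q b) = 1 := by simp [wt]
  rw [this, Finset.prod_const_one]

lemma conv_identity (q q' : ℝ) (G : (Fin n → Bool) → ℝ) :
    ∑ x : Fin n → Bool, ∑ y : Fin n → Bool, W q x * W q' y * G (x ⊔ y)
      = ∑ z : Fin n → Bool, W (q * q') z * G z := by
  classical
  have sup_or : ∀ x y : Fin n → Bool, x ⊔ y = fun i => (x i || y i) := by
    intro x y; funext i
    have h : (x ⊔ y) i = x i ⊔ y i := rfl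
    rw [h]; cases x i <;> cases y i <;> decide
  have h1 : ∑ x : Fin n → Bool, ∑ y : Fin n → Bool, W q x * W q' y * G (x ⊔ y)
      = ∑ p : Fin n → Bool × Bool,
          (∏ i, (wt q (p i).1 * wt q' (p i).2)) * G (fun i => ((p i).1 || (p i).2)) := by
    have hstep : ∑ x : Fin n → Bool, ∑ y : Fin n → Bool, W q x * W q' y * G (x ⊔ y)
        = ∑ xy : (Fin n → Bool) × (Fin n → Bool), W q xy.1 * W q' xy.2 * G (xy.1 ⊔ xy.2) :=
      (Fintype.sum_prod_type (fun xy : (Fin n → Bool) × (Fin n → Bool) =>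
        W q xy.1 * W q' xy.2 * G (xy.1 ⊔ xy.2))).symm
    rw [hstep]
    refine (Fintype.sum_equiv (Equiv.arrowProdEquivProdArrow (Fin n) (fun _ => Bool) (fun _ => Bool)) _ _ ?_).symm
    intro p
    have he : (Equiv.arrowProdEquivProdArrow (Fin n) (fun _ => Bool) (fun _ => Bool)) p
        = (fun i => (p i).1, fun i => (p i).2) := rfl
    rw [he]
    have hW1 : W q (fun i => (p i).1) * W q' (fun i => (p i).2)
        = ∏ i, (wt q (p i).1 * wt q' (p i).2) := by
      rw [W, W, ← Finset.prod_mul_distrib]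
    have hsup : ((fun i => (p i).1) ⊔ (fun i => (p i).2)) = fun i => ((p i).1 || (p i).2) :=
      sup_or _ _
    rw [← hW1, hsup]
  rw [h1]
  have hind : ∀ (p : Fin n → Bool × Bool) (z : Fin n → Bool),
      (∏ i, (if ((p i).1 || (p i).2) = z i then (1:ℝ) else 0))
        = if (fun i => ((p i).1 || (p i).2)) = z then 1 else 0 := by
    intro p z
    by_cases h : (fun i => ((p i).1 || (p i).2)) = z
    · have : ∀ i, ((p i).1 || (p i).2) = z i := fun i => congrFun h i
      simp [h, this]
    · rw [if_neg h]
      rw [funext_iff] at h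
      push_neg at h
      obtain ⟨i, hi⟩ := h
      exact Finset.prod_eq_zero (mem_univ i) (by rw [if_neg hi])
  have key : ∀ p : Fin n → Bool × Bool,
      (∏ i, (wt q (p i).1 * wt q' (p i).2)) * G (fun i => ((p i).1 || (p i).2))
        = ∑ z : Fin n → Bool,
            (∏ i, (wt q (p i).1 * wt q' (p i).2 * (if ((p i).1 || (p i).2) = z i then 1 else 0)))
              * G z := by
    intro p
    have expand : ∀ z : Fin n → Bool,
        (∏ i, (wt q (p i).1 * wt q' (p i).2 * (if ((p i).1 || (p i).2) = z i then 1 else 0)))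
        = (∏ i, (wt q (p i).1 * wt q' (p i).2))
          * (if (fun i => ((p i).1 || (p i).2)) = z then 1 else 0) := by
      intro z
      rw [← hind p z, ← Finset.prod_mul_distrib]
    calc (∏ i, (wt q (p i).1 * wt q' (p i).2)) * G (fun i => ((p i).1 || (p i).2))
        = (∏ i, (wt q (p i).1 * wt q' (p i).2))
          * ∑ z : Fin n → Bool,
              (if (fun i => ((p i).1 || (p i).2)) = z then 1 else 0) * G z := by
          rw [show ∑ z : Fin n → Bool,
              (if (fun i => ((p i).1 || (p i).2)) = z then 1 else 0) * G z
              = G (fun i => ((p i).1 || (p i).2)) from by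
            rw [Finset.sum_congr rfl (fun z _ => by rw [ite_mul, one_mul, zero_mul])]
            rw [Finset.sum_ite_eq univ _ G]
            simp]
      _ = ∑ z : Fin n → Bool,
            (∏ i, (wt q (p i).1 * wt q' (p i).2 * (if ((p i).1 || (p i).2) = z i then 1 else 0)))
              * G z := by
          rw [Finset.mul_sum]
          exact Finset.sum_congr rfl (fun z _ => by rw [expand z]; ring)
  rw [Finset.sum_congr rfl (fun p _ => key p)]
  rw [Finset.sum_comm]
  refine Finset.sum_congr rfl (fun z _ => ?_)
  rw [← Finset.sum_mul]
  congr 1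
  have hkey := sum_prod_eq' (n := n) (κ := Bool × Bool)
    (v := fun i c => wt q c.1 * wt q' c.2 * (if (c.1 || c.2) = z i then 1 else 0))
  rw [hkey]
  rw [W]
  refine Finset.prod_congr rfl (fun i _ => ?_)
  rcases Bool.eq_false_or_eq_true (z i) with hz | hz <;>
    · rw [hz]
      simp [Fintype.sum_prod_type, wt]
      try ring

/-! ### single-coordinate factorization -/

lemma sum_split (i : Fin n) (F : (Fin n → Bool) → ℝ) :
    ∑ x : Fin n → Bool, F x
      = ∑ x ∈ univ.filter (fun x : Fin n → Bool => x i = true),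
          (F x + F (Function.update x i false)) := by
  classical
  rw [← Finset.sum_filter_add_sum_filter_not univ (fun x : Fin n → Bool => x i = true) F]
  rw [Finset.sum_add_distrib]
  congr 1
  refine Finset.sum_nbij' (fun x => Function.update x i true) (fun x => Function.update x i false)
    ?_ ?_ ?_ ?_ ?_
  · intro a ha; simp at ha ⊢
  · intro a ha; simp at ha ⊢
  · intro a ha
    simp only [mem_filter, mem_univ, true_and] at ha
    simp only [Function.update_idem]
    rw [show (false : Bool) = a i from by simp [ha], Function.update_eq_self]
  · intro a ha
    simp only [mem_filter, mem_univ, true_and] at ha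
    simp only [Function.update_idem]
    rw [show (true : Bool) = a i from ha.symm, Function.update_eq_self]
  · intro a ha
    simp only [mem_filter, mem_univ, true_and] at ha
    have h2 : Function.update a i false = a := by
      rw [show (false : Bool) = a i from by simp [ha], Function.update_eq_self]
    simp only [Function.update_idem]
    rw [h2]

lemma W_split {q : ℝ} (i : Fin n) (x : Fin n → Bool) :
    W q x = wt q (x i) * ∏ j ∈ univ.erase i, wt q (x j) :=
  (Finset.mul_prod_erase univ _ (mem_univ i)).symm

lemma W_update_false {q : ℝ} (i : Fin n) (x : Fin n → Bool) :
    W q (Function.update x i false) = q * ∏ j ∈ univ.erase i, wt q (x j) := by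
  rw [W_split i (Function.update x i false), Function.update_self]
  have hpr : ∏ j ∈ univ.erase i, wt q (Function.update x i false j)
      = ∏ j ∈ univ.erase i, wt q (x j) :=
    Finset.prod_congr rfl fun j hj => by rw [Function.update_of_ne (Finset.ne_of_mem_erase hj)]
  rw [hpr]
  simp [wt]

lemma FACT {q : ℝ} (i : Fin n) (h : Bool → ℝ) (g : (Fin n → Bool) → ℝ)
    (hg : ∀ x b, g (Function.update x i b) = g x) :
    ∑ x : Fin n → Bool, W q x * h (x i) * g x
      = (q * h false + (1 - q) * h true) * ∑ x : Fin n → Bool, W q x * g x := by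
  classical
  rw [sum_split i (fun x => W q x * h (x i) * g x), sum_split i (fun x => W q x * g x)]
  rw [Finset.mul_sum]
  refine Finset.sum_congr rfl fun x hx => ?_
  simp only [mem_filter, mem_univ, true_and] at hx
  have hWx : W q x = (1 - q) * ∏ j ∈ univ.erase i, wt q (x j) := by
    rw [W_split i, hx]; simp [wt]
  have hupd : (Function.update x i false) i = false := Function.update_self i false x
  have hgf : g (Function.update x i false) = g x := hg x false
  rw [hWx, W_update_false, hupd, hx, hgf]
  ring

/-! ### biased probabilities -/

open Classical in
def Pq {n : ℕ} (q : ℝ) (A : (Fin n → Bool) → Prop) : ℝ :=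
  ∑ x : Fin n → Bool, W q x * (if A x then 1 else 0)

lemma Pq_nonneg {q : ℝ} (h0 : 0 ≤ q) (h1 : q ≤ 1) (A : (Fin n → Bool) → Prop) :
    0 ≤ Pq q A := by
  classical
  refine Finset.sum_nonneg fun x _ => mul_nonneg (W_nonneg h0 h1 x) ?_
  split <;> norm_num

lemma Pq_le_one {q : ℝ} (h0 : 0 ≤ q) (h1 : q ≤ 1) (A : (Fin n → Bool) → Prop) :
    Pq q A ≤ 1 := by
  classical
  calc Pq q A ≤ ∑ x : Fin n → Bool, W q x := by
        refine Finset.sum_le_sum fun x _ => ?_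
        have := W_nonneg h0 h1 x
        split <;> nlinarith
    _ = 1 := sum_W q

def DownClosed {n : ℕ} (A : (Fin n → Bool) → Prop) : Prop :=
  ∀ x y : Fin n → Bool, x ≤ y → A y → A x

lemma Pq_submult {q q' : ℝ} (h0 : 0 ≤ q) (h1 : q ≤ 1) (h0' : 0 ≤ q') (h1' : q' ≤ 1)
    {A : (Fin n → Bool) → Prop} (hA : DownClosed A) :
    Pq (q * q') A ≤ Pq q A * Pq q' A := by
  classical
  have hrhs : Pq q A * Pq q' A
      = ∑ x : Fin n → Bool, ∑ y : Fin n → Bool,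
          (W q x * (if A x then 1 else 0)) * (W q' y * (if A y then 1 else 0)) := by
    rw [Pq, Pq, Finset.sum_mul_sum]
  have hlhs : Pq (q * q') A
      = ∑ x : Fin n → Bool, ∑ y : Fin n → Bool,
          W q x * W q' y * (if A (x ⊔ y) then 1 else 0) :=
    (conv_identity q q' _).symm
  rw [hlhs, hrhs]
  refine Finset.sum_le_sum fun x _ => Finset.sum_le_sum fun y _ => ?_
  by_cases hxy : A (x ⊔ y)
  · have hx : A x := hA x (x ⊔ y) le_sup_left hxy
    have hy : A y := hA y (x ⊔ y) le_sup_right hxy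
    rw [if_pos hxy, if_pos hx, if_pos hy]
    ring_nf
    exact le_refl _
  · rw [if_neg hxy, mul_zero]
    have hW1 := W_nonneg h0 h1 x
    have hW2 := W_nonneg h0' h1' y
    have : (0:ℝ) ≤ (if A x then (1:ℝ) else 0) := by split <;> norm_num
    have : (0:ℝ) ≤ (if A y then (1:ℝ) else 0) := by split <;> norm_num
    positivity

lemma Pq_pow {q : ℝ} (h0 : 0 ≤ q) (h1 : q ≤ 1)
    {A : (Fin n → Bool) → Prop} (hA : DownClosed A) (m : ℕ) :
    Pq (q ^ m) A ≤ (Pq q A) ^ m := by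
  induction m with
  | zero => simpa using Pq_le_one (by norm_num) (by norm_num) A
  | succ k ih =>
    have hqk0 : 0 ≤ q ^ k := pow_nonneg h0 k
    have hqk1 : q ^ k ≤ 1 := pow_le_one₀ h0 h1
    calc Pq (q ^ (k+1)) A = Pq (q ^ k * q) A := by rw [pow_succ]
      _ ≤ Pq (q ^ k) A * Pq q A := Pq_submult hqk0 hqk1 h0 h1 hA
      _ ≤ (Pq q A) ^ k * Pq q A := by
          refine mul_le_mul_of_nonneg_right ih (Pq_nonneg h0 h1 A)
      _ = (Pq q A) ^ (k+1) := by rw [pow_succ]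

lemma Pq_half (A : (Fin n → Bool) → Prop) : Pq (1/2) A = PrU A := by
  classical
  have hW : ∀ x : Fin n → Bool, W (1/2 : ℝ) x = (1/2) ^ n := by
    intro x
    rw [W]
    have : ∀ i : Fin n, wt (1/2 : ℝ) (x i) = 1/2 := by
      intro i; cases x i <;> norm_num [wt]
    rw [Finset.prod_congr rfl (fun i _ => this i), Finset.prod_const]
    simp
  rw [Pq, PrU, EU]
  rw [Finset.sum_congr rfl (fun x _ => by rw [hW x])]
  rw [← Finset.mul_sum, one_div, inv_pow, div_eq_mul_inv, mul_comm]

/-! ### analytic endgame -/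

lemma two_rpow_le_one_add {u : ℝ} (h0 : 0 ≤ u) (h1 : u ≤ 1) : (2:ℝ) ^ (u:ℝ) ≤ 1 + u := by
  have hconv := convexOn_exp.2 (Set.mem_univ (0:ℝ)) (Set.mem_univ (Real.log 2))
    (by linarith : (0:ℝ) ≤ 1 - u) h0 (by ring)
  have h2 : (2:ℝ) ^ (u:ℝ) = Real.exp (u * Real.log 2) := by
    rw [Real.rpow_def_of_pos (by norm_num : (0:ℝ) < 2)]
    ring_nf
  rw [h2]
  have : (1 - u) • (0:ℝ) + u • Real.log 2 = u * Real.log 2 := by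
    simp [smul_eq_mul]
  rw [this] at hconv
  calc Real.exp (u * Real.log 2)
      ≤ (1-u) • Real.exp 0 + u • Real.exp (Real.log 2) := hconv
    _ = (1-u) * 1 + u * 2 := by
        rw [Real.exp_zero, Real.exp_log (by norm_num : (0:ℝ) < 2)]
        simp [smul_eq_mul]
    _ = 1 + u := by ring

lemma endgame {m : ℕ} (hm : 1 ≤ m) {L : ℝ} (hmL : (m:ℝ) ≤ L) (hLm : L < m + 1) :
    (2:ℝ) ^ (L / m : ℝ) ≤ 4 * L * (1 - (2:ℝ) ^ (-(1/(m:ℝ)) : ℝ)) := by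
  have hm0 : (0:ℝ) < m := by exact_mod_cast hm
  have hL0 : 0 < L := lt_of_lt_of_le hm0 hmL
  have hu0 : 0 ≤ (L - m) / m := div_nonneg (by linarith) (le_of_lt hm0)
  have hm0' : (1:ℝ) ≤ m := by exact_mod_cast hm
  have hu1 : (L - m) / m ≤ 1 := by
    rw [div_le_one hm0]; linarith
  have hLm1 : (1:ℝ) + (L - m)/m = L / m := by field_simp; ring
  have hsplit : (2:ℝ) ^ (L / m : ℝ) = 2 * (2:ℝ) ^ ((L - m)/m : ℝ) := by
    rw [← hLm1, Real.rpow_add (by norm_num : (0:ℝ) < 2), Real.rpow_one]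
  have hLHS : (2:ℝ) ^ (L / m : ℝ) ≤ 2 * (L / m) := by
    rw [hsplit]
    have := two_rpow_le_one_add hu0 hu1
    have h2 : (1:ℝ) + (L-m)/m = L/m := hLm1
    nlinarith
  -- now bound the RHS from below
  rcases Nat.lt_or_ge m 2 with hm2 | hm2
  · -- m = 1
    have hmeq : m = 1 := le_antisymm (Nat.lt_succ_iff.mp hm2) hm
    have hmR1 : ((m:ℕ):ℝ) = 1 := by rw [hmeq]; norm_num
    rw [hmR1] at hLHS ⊢
    have hhalf : (2:ℝ) ^ (-(1/(1:ℝ)) : ℝ) = 1/2 := by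
      rw [show (-(1/(1:ℝ)) : ℝ) = (-1 : ℝ) from by norm_num, Real.rpow_neg_one]
      norm_num
    rw [hhalf]
    have h2L : 2 * (L/1) = 2 * L := by ring
    rw [h2L] at hLHS
    calc (2:ℝ) ^ (L / (1:ℝ) : ℝ) ≤ 2 * L := hLHS
      _ = 4 * L * (1 - 1/2) := by ring
  · -- m ≥ 2
    have hm2' : (2:ℝ) ≤ m := by exact_mod_cast hm2
    set c := Real.log 2 with hc
    have hc1 : 0.6931471803 < c := Real.log_two_gt_d9
    have hcm : (2:ℝ) ^ (-(1/(m:ℝ)) : ℝ) = Real.exp (-(c/m)) := by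
      rw [Real.rpow_def_of_pos (by norm_num : (0:ℝ) < 2)]
      congr 1
      field_simp
      rw [hc]
    have hexp : Real.exp (-(c/m)) ≤ 1 / (1 + c/m) := by
      have h1 : 1 + c/m ≤ Real.exp (c/m) := by
        have := Real.add_one_le_exp (c/m)
        linarith
      have hpos : 0 < 1 + c/m := by positivity
      rw [Real.exp_neg, one_div]
      exact inv_anti₀ hpos h1
    have hlow : (c/m) / (1 + c/m) ≤ 1 - (2:ℝ) ^ (-(1/(m:ℝ)) : ℝ) := by
      rw [hcm]
      have hpos : 0 < 1 + c/m := by positivity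
      have : 1 - 1/(1 + c/m) = (c/m)/(1 + c/m) := by field_simp; ring
      linarith [hexp]
    -- key numeric: 2 * m * ((c/m)/(1+c/m)) ≥ 1
    have hnum : 1 ≤ 2 * (m:ℝ) * ((c/m) / (1 + c/m)) := by
      have hpos : 0 < 1 + c/m := by positivity
      have h2 : 2 * (m:ℝ) * ((c/m)/(1+c/m)) = 2*c/(1+c/m) := by field_simp
      rw [h2, le_div_iff₀ hpos]
      have hcm2 : c/(m:ℝ) ≤ c/2 :=
        div_le_div_of_nonneg_left (by linarith) (by norm_num) hm2'
      nlinarith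
    calc (2:ℝ) ^ (L / m : ℝ) ≤ 2 * (L/m) := hLHS
      _ ≤ 4 * L * ((c/m)/(1+c/m)) := by
          have hpos : 0 < 1 + c/m := by positivity
          have expand : 4 * L * ((c/m)/(1+c/m)) = 2 * (L/m) * (2*(m:ℝ)*((c/m)/(1+c/m))) := by
            field_simp
            ring
          rw [expand]
          nlinarith [hnum, div_pos hL0 hm0]
      _ ≤ 4 * L * (1 - (2:ℝ) ^ (-(1/(m:ℝ)) : ℝ)) := by
          apply mul_le_mul_of_nonneg_left hlow (by linarith)

end
end SM7

namespace SM7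

open Finset

noncomputable section

lemma side_bound {n : ℕ} (f : (Fin n → Bool) → ℝ) (hf : Submodular f)
    (hrange : ∀ x, f x ∈ Set.Icc (0:ℝ) 1) {ε δ : ℝ}
    (hε0 : 0 < ε) (hδ0 : 0 < δ) (hδ1 : δ < 1) :
    (((univ : Finset (Fin n)).filter
        (fun i : Fin n => δ/2 ≤ PrU (fun x => ε ≤ d1 f i x))).card : ℝ)
      ≤ 4 / ε * Real.logb 2 (2/δ) := by
  classical
  set T := (univ : Finset (Fin n)).filter
      (fun i : Fin n => δ/2 ≤ PrU (fun x => ε ≤ d1 f i x)) with hT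
  set L := Real.logb 2 (2/δ) with hLdef
  have hL1 : 1 < L := by
    rw [hLdef]
    have h2δ : (2:ℝ) < 2/δ := by rw [lt_div_iff₀ hδ0]; nlinarith
    calc (1:ℝ) = Real.logb 2 2 := (Real.logb_self_eq_one (by norm_num)).symm
      _ < Real.logb 2 (2/δ) := Real.logb_lt_logb (by norm_num) (by norm_num) h2δ
  have hL0 : 0 < L := by linarith
  set m := ⌊L⌋₊ with hm
  have hm1 : 1 ≤ m := Nat.le_floor (by exact_mod_cast hL1.le)
  have hmR : (m:ℝ) ≤ L := Nat.floor_le hL0.le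
  have hmR0 : (0:ℝ) < m := by exact_mod_cast hm1
  have hLlt : L < m + 1 := Nat.lt_floor_add_one L
  set q := (2:ℝ) ^ (-(1/(m:ℝ)) : ℝ) with hq
  have hq0 : 0 < q := Real.rpow_pos_of_pos (by norm_num) _
  have hq1 : q < 1 := by
    rw [hq]
    have h1m : 0 < 1/(m:ℝ) := by positivity
    exact Real.rpow_lt_one_of_one_lt_of_neg (by norm_num) (by linarith)
  have hqm : q ^ m = 1/2 := by
    rw [hq, ← Real.rpow_natCast ((2:ℝ) ^ (-(1/(m:ℝ)) : ℝ)) m,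
      ← Real.rpow_mul (by norm_num : (0:ℝ) ≤ 2)]
    rw [show (-(1/(m:ℝ)) * (m:ℕ)) = (-1 : ℝ) from by field_simp]
    rw [Real.rpow_neg_one]
    norm_num
  have hdown : ∀ i : Fin n, DownClosed (fun x => ε ≤ d1 f i x) := by
    intro i x y hxy hy
    exact le_trans hy (d1_antitone hf i hxy)
  have hbeta : ∀ i ∈ T, (δ/2) ^ ((1:ℝ)/(m:ℝ)) ≤ Pq q (fun x => ε ≤ d1 f i x) := by
    intro i hi
    rw [hT, mem_filter] at hi
    have h1 : δ/2 ≤ (Pq q (fun x => ε ≤ d1 f i x)) ^ m := by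
      calc δ/2 ≤ PrU (fun x => ε ≤ d1 f i x) := hi.2
        _ = Pq (1/2) (fun x => ε ≤ d1 f i x) := (Pq_half _).symm
        _ = Pq (q ^ m) (fun x => ε ≤ d1 f i x) := by rw [hqm]
        _ ≤ (Pq q (fun x => ε ≤ d1 f i x)) ^ m := Pq_pow hq0.le hq1.le (hdown i) m
    have hPq0 : 0 ≤ Pq q (fun x => ε ≤ d1 f i x) := Pq_nonneg hq0.le hq1.le _
    have h2 := Real.rpow_le_rpow (by positivity) h1
      (by positivity : (0:ℝ) ≤ 1/(m:ℝ))
    rwa [← Real.rpow_natCast (Pq q (fun x => ε ≤ d1 f i x)) m, ← Real.rpow_mul hPq0,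
      mul_one_div, div_self (ne_of_gt hmR0), Real.rpow_one] at h2
  have hEq : ∀ i : Fin n,
      ∑ x : Fin n → Bool, W q x * (if (x i = true ∧ ε ≤ d1 f i x) then (1:ℝ) else 0)
        = (1 - q) * Pq q (fun x => ε ≤ d1 f i x) := by
    intro i
    have hsplit : ∀ x : Fin n → Bool, W q x * (if (x i = true ∧ ε ≤ d1 f i x) then (1:ℝ) else 0)
        = W q x * (if x i = true then (1:ℝ) else 0) * (if ε ≤ d1 f i x then (1:ℝ) else 0) := by
      intro x
      by_cases h1 : x i = true <;> by_cases h2 : ε ≤ d1 f i x <;>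
        simp [h1, h2]
    rw [Finset.sum_congr rfl (fun x _ => hsplit x)]
    have hFACT := FACT (q := q) i (fun b => if b = true then (1:ℝ) else 0)
      (fun x => if ε ≤ d1 f i x then (1:ℝ) else 0)
      (fun x b => by
        show (if ε ≤ d1 f i (Function.update x i b) then (1:ℝ) else 0)
            = (if ε ≤ d1 f i x then (1:ℝ) else 0)
        simp only [d1_update_self])
    rw [hFACT]
    rw [Pq]
    norm_num
  have hsum_i : ∀ i ∈ T, (1-q) * (δ/2) ^ ((1:ℝ)/(m:ℝ))
      ≤ ∑ x : Fin n → Bool, W q x * (if (x i = true ∧ ε ≤ d1 f i x) then (1:ℝ) else 0) := by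
    intro i hi
    rw [hEq i]
    exact mul_le_mul_of_nonneg_left (hbeta i hi) (by linarith)
  have hswap : ∑ i ∈ T, ∑ x : Fin n → Bool,
        W q x * (if (x i = true ∧ ε ≤ d1 f i x) then (1:ℝ) else 0)
      = ∑ x : Fin n → Bool,
          W q x * ((T.filter (fun i => x i = true ∧ ε ≤ d1 f i x)).card : ℝ) := by
    rw [Finset.sum_comm]
    refine Finset.sum_congr rfl fun x _ => ?_
    rw [← Finset.mul_sum]
    congr 1
    rw [Finset.sum_boole]
  have hcard_bound : ∀ x : Fin n → Bool,
      ((T.filter (fun i => x i = true ∧ ε ≤ d1 f i x)).card : ℝ) ≤ 1/ε := by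
    intro x
    have h1 : ∀ i ∈ T.filter (fun i => x i = true ∧ ε ≤ d1 f i x), x i = true := by
      intro i hi; exact (Finset.mem_filter.mp hi).2.1
    have h2 : ∀ i ∈ T.filter (fun i => x i = true ∧ ε ≤ d1 f i x), ε ≤ d1 f i x := by
      intro i hi; exact (Finset.mem_filter.mp hi).2.2
    have hcb := chain_bound hf ε x _ h1 h2
    have hr1 := (hrange (zeroOn (T.filter (fun i => x i = true ∧ ε ≤ d1 f i x)) x)).1
    have hr2 := (hrange x).2
    rw [le_div_iff₀ hε0]
    nlinarith
  have hmain : (T.card : ℝ) * ((1-q) * (δ/2) ^ ((1:ℝ)/(m:ℝ))) ≤ 1/ε := by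
    calc (T.card : ℝ) * ((1-q) * (δ/2) ^ ((1:ℝ)/(m:ℝ)))
        = ∑ _i ∈ T, (1-q) * (δ/2) ^ ((1:ℝ)/(m:ℝ)) := by
          rw [Finset.sum_const, nsmul_eq_mul]
      _ ≤ ∑ i ∈ T, ∑ x : Fin n → Bool,
            W q x * (if (x i = true ∧ ε ≤ d1 f i x) then (1:ℝ) else 0) :=
          Finset.sum_le_sum hsum_i
      _ = ∑ x : Fin n → Bool,
            W q x * ((T.filter (fun i => x i = true ∧ ε ≤ d1 f i x)).card : ℝ) := hswap
      _ ≤ ∑ x : Fin n → Bool, W q x * (1/ε) :=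
          Finset.sum_le_sum fun x _ =>
            mul_le_mul_of_nonneg_left (hcard_bound x) (W_nonneg hq0.le hq1.le x)
      _ = 1/ε := by rw [← Finset.sum_mul, sum_W, one_mul]
  have hδ2 : (δ/2 : ℝ) = (2:ℝ) ^ (-L : ℝ) := by
    have h2L : (2:ℝ) ^ (L:ℝ) = 2/δ := Real.rpow_logb (by norm_num) (by norm_num) (by positivity)
    rw [Real.rpow_neg (by norm_num : (0:ℝ) ≤ 2), h2L, inv_div]
  have hpow : (δ/2 : ℝ) ^ ((1:ℝ)/(m:ℝ)) = (2:ℝ) ^ (-(L/(m:ℝ)) : ℝ) := by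
    rw [hδ2, ← Real.rpow_mul (by norm_num : (0:ℝ) ≤ 2)]
    congr 1
    rw [neg_mul, mul_one_div]
  rw [hpow] at hmain
  have hend := endgame hm1 hmR hLlt
  have hq1' : (0:ℝ) < 1 - q := by linarith
  have hprod : (2:ℝ) ^ (-(L/(m:ℝ)) : ℝ) * (2:ℝ) ^ ((L/(m:ℝ)) : ℝ) = 1 := by
    rw [← Real.rpow_add (by norm_num : (0:ℝ) < 2)]
    norm_num
  have hppos : (0:ℝ) < (2:ℝ) ^ ((L/(m:ℝ)) : ℝ) := Real.rpow_pos_of_pos (by norm_num) _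
  have hstep1 : (T.card : ℝ) * (1-q) ≤ (2:ℝ) ^ ((L/(m:ℝ)) : ℝ) * (1/ε) := by
    have h := mul_le_mul_of_nonneg_right hmain hppos.le
    calc (T.card:ℝ) * (1-q)
        = (T.card:ℝ) * ((1-q) * ((2:ℝ)^(-(L/(m:ℝ)):ℝ) * (2:ℝ)^((L/(m:ℝ)):ℝ))) := by
          rw [hprod]; ring
      _ = (T.card:ℝ) * ((1-q) * (2:ℝ)^(-(L/(m:ℝ)):ℝ)) * (2:ℝ)^((L/(m:ℝ)):ℝ) := by ring
      _ ≤ (1/ε) * (2:ℝ)^((L/(m:ℝ)):ℝ) := h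
      _ = (2:ℝ)^((L/(m:ℝ)):ℝ) * (1/ε) := by ring
  have hstep2 : (T.card : ℝ) * (1-q) ≤ (4*L*(1-q)) * (1/ε) :=
    le_trans hstep1 (mul_le_mul_of_nonneg_right hend (by positivity))
  have hfin : (T.card : ℝ) ≤ 4*L*(1/ε) := by
    nlinarith [hstep2, hq1', mul_pos (mul_pos (by norm_num : (0:ℝ) < 4) hL0) (by positivity : (0:ℝ) < 1/ε)]
  calc (T.card:ℝ) ≤ 4*L*(1/ε) := hfin
    _ = 4/ε * L := by ring

end
end SM7

open Finset in
open Classical in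
/-- For submodular f : {0,1}^n → [0,1] and 0 < ε, δ < 1, the set
J(ε,δ) = {i : Pr[|∂_i f(x)| ≥ ε] ≥ δ} has size at most (8/ε)·log₂(2/δ). -/
theorem stmt7 {n : ℕ} (f : (Fin n → Bool) → ℝ) (hf : Submodular f)
    (hrange : ∀ x, f x ∈ Set.Icc (0 : ℝ) 1) (ε δ : ℝ)
    (hε0 : 0 < ε) (hε1 : ε < 1) (hδ0 : 0 < δ) (hδ1 : δ < 1) :
    ((Finset.univ.filter (fun i : Fin n =>
        δ ≤ PrU (fun x => ε ≤ |d1 f i x|))).card : ℝ)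
      ≤ 8 / ε * Real.logb 2 (2 / δ) := by
  classical
  set g : (Fin n → Bool) → ℝ := fun x => f (fun j => ! (x j)) with hgdef
  have hflipfun : ∀ (x : Fin n → Bool) (i : Fin n) (b : Bool),
      (fun j => ! (Function.update x i b j)) = Function.update (fun j => ! (x j)) i (! b) := by
    intro x i b
    funext j
    rcases eq_or_ne j i with rfl | hji
    · rw [Function.update_self, Function.update_self]
    · rw [Function.update_of_ne hji, Function.update_of_ne hji]
  have hgsub : Submodular g := by
    intro x y
    have hs : (fun j => ! ((x ⊔ y) j)) = ((fun j => ! (x j)) ⊓ (fun j => ! (y j))) := by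
      funext j
      have h1 : (x ⊔ y) j = x j ⊔ y j := rfl
      have h2 : ((fun j => ! (x j)) ⊓ (fun j => ! (y j))) j = (! (x j)) ⊓ (! (y j)) := rfl
      rw [h1, h2]
      cases x j <;> cases y j <;> decide
    have hi : (fun j => ! ((x ⊓ y) j)) = ((fun j => ! (x j)) ⊔ (fun j => ! (y j))) := by
      funext j
      have h1 : (x ⊓ y) j = x j ⊓ y j := rfl
      have h2 : ((fun j => ! (x j)) ⊔ (fun j => ! (y j))) j = (! (x j)) ⊔ (! (y j)) := rfl
      rw [h1, h2]
      cases x j <;> cases y j <;> decide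
    have := hf (fun j => ! (x j)) (fun j => ! (y j))
    simp only [hgdef, hs, hi]
    linarith [this]
  have hgrange : ∀ x, g x ∈ Set.Icc (0:ℝ) 1 := fun x => hrange _
  have hd1g : ∀ (i : Fin n) (x : Fin n → Bool),
      d1 g i x = - d1 f i (fun j => ! (x j)) := by
    intro i x
    simp only [d1, hgdef]
    rw [hflipfun x i true, hflipfun x i false]
    simp only [Bool.not_true, Bool.not_false]
    ring
  have hflip_pr : ∀ i : Fin n,
      PrU (fun x => ε ≤ d1 g i x) = PrU (fun x => d1 f i x ≤ -ε) := by
    intro i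
    have hbij : Function.Bijective (fun x : Fin n → Bool => (fun j => ! (x j))) := by
      have hinv : Function.Involutive (fun x : Fin n → Bool => (fun j => ! (x j))) := by
        intro x; funext j; simp
      exact hinv.bijective
    simp only [PrU, EU]
    congr 1
    refine Fintype.sum_bijective _ hbij _ _ (fun x => ?_)
    refine if_congr ?_ rfl rfl
    rw [hd1g i x]
    constructor
    · intro h; linarith
    · intro h; linarith
  -- splitting
  have hsplit : ∀ i : Fin n, δ ≤ PrU (fun x => ε ≤ |d1 f i x|) →
      δ/2 ≤ PrU (fun x => ε ≤ d1 f i x) ∨ δ/2 ≤ PrU (fun x => ε ≤ d1 g i x) := by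
    intro i hi
    rw [hflip_pr i]
    by_contra hcon
    push_neg at hcon
    have hsub : PrU (fun x => ε ≤ |d1 f i x|)
        ≤ PrU (fun x => ε ≤ d1 f i x) + PrU (fun x => d1 f i x ≤ -ε) := by
      simp only [PrU, EU, ← add_div]
      gcongr ?_ / _
      rw [← Finset.sum_add_distrib]
      refine Finset.sum_le_sum fun x _ => ?_
      by_cases h : ε ≤ |d1 f i x|
      · rw [if_pos h]
        rcases le_abs.mp h with h1 | h1
        · rw [if_pos h1]
          have : (0:ℝ) ≤ (if d1 f i x ≤ -ε then (1:ℝ) else 0) := by positivity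
          linarith
        · rw [if_pos (by linarith : d1 f i x ≤ -ε)]
          have : (0:ℝ) ≤ (if ε ≤ d1 f i x then (1:ℝ) else 0) := by positivity
          linarith
      · rw [if_neg h]
        have h1 : (0:ℝ) ≤ (if ε ≤ d1 f i x then (1:ℝ) else 0) := by positivity
        have h2 : (0:ℝ) ≤ (if d1 f i x ≤ -ε then (1:ℝ) else 0) := by positivity
        linarith
    linarith [hi, hsub, hcon.1, hcon.2]
  -- assemble
  have hsubJ : (Finset.univ.filter (fun i : Fin n => δ ≤ PrU (fun x => ε ≤ |d1 f i x|)))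
      ⊆ (Finset.univ.filter (fun i : Fin n => δ/2 ≤ PrU (fun x => ε ≤ d1 f i x)))
        ∪ (Finset.univ.filter (fun i : Fin n => δ/2 ≤ PrU (fun x => ε ≤ d1 g i x))) := by
    intro i hi
    rw [Finset.mem_filter] at hi
    rcases hsplit i hi.2 with h | h
    · exact Finset.mem_union_left _ (Finset.mem_filter.mpr ⟨Finset.mem_univ i, h⟩)
    · exact Finset.mem_union_right _ (Finset.mem_filter.mpr ⟨Finset.mem_univ i, h⟩)
  have hcard : ((Finset.univ.filter (fun i : Fin n =>
        δ ≤ PrU (fun x => ε ≤ |d1 f i x|))).card : ℝ)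
      ≤ ((Finset.univ.filter (fun i : Fin n =>
          δ/2 ≤ PrU (fun x => ε ≤ d1 f i x))).card : ℝ)
        + ((Finset.univ.filter (fun i : Fin n =>
          δ/2 ≤ PrU (fun x => ε ≤ d1 g i x))).card : ℝ) := by
    have h1 := Finset.card_le_card hsubJ
    have h2 := Finset.card_union_le
      (Finset.univ.filter (fun i : Fin n => δ/2 ≤ PrU (fun x => ε ≤ d1 f i x)))
      (Finset.univ.filter (fun i : Fin n => δ/2 ≤ PrU (fun x => ε ≤ d1 g i x)))
    have := le_trans h1 h2
    exact_mod_cast this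
  have hs1 := SM7.side_bound f hf hrange hε0 hδ0 hδ1
  have hs2 := SM7.side_bound g hgsub hgrange hε0 hδ0 hδ1
  have hL0 : 0 ≤ Real.logb 2 (2/δ) := by
    apply Real.logb_nonneg (by norm_num)
    rw [le_div_iff₀ hδ0]; nlinarith
  calc ((Finset.univ.filter (fun i : Fin n =>
        δ ≤ PrU (fun x => ε ≤ |d1 f i x|))).card : ℝ)
      ≤ _ + _ := hcard
    _ ≤ 4/ε * Real.logb 2 (2/δ) + 4/ε * Real.logb 2 (2/δ) := add_le_add hs1 hs2
    _ = 8 / ε * Real.logb 2 (2 / δ) := by ring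
end

section
/- There is a universal constant C > 0 such that for every submodular function f : {0,1}^n → [0,1] and every 0 < ε < 1, the number of coordinates i ∈ [n] with ‖∂_i f‖_T ≥ ε is at most (C/ε) · log(2/ε). -/
open Finset

noncomputable section S8sec
open Classical

namespace S8

variable {n : ℕ}

def w (p : ℝ) {n : ℕ} (x : Fin n → Bool) : ℝ := ∏ i, (if x i then p else 1 - p)

lemma w_nonneg {p : ℝ} (h0 : 0 ≤ p) (h1 : p ≤ 1) (x : Fin n → Bool) : 0 ≤ w p x :=
  Finset.prod_nonneg fun i _ => by split <;> linarith

lemma w_cons (p : ℝ) (b : Bool) (y : Fin n → Bool) :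
    w p (Fin.cons b y) = (if b then p else 1 - p) * w p y := by
  rw [w, Fin.prod_univ_succ]
  simp [w]

lemma sum_succ (g : (Fin (n+1) → Bool) → ℝ) :
    ∑ x : Fin (n+1) → Bool, g x = ∑ b : Bool, ∑ y : Fin n → Bool, g (Fin.cons b y) := by
  calc ∑ x : Fin (n+1) → Bool, g x
      = ∑ q : Bool × (Fin n → Bool), g (Fin.cons q.1 q.2) :=
        (Fintype.sum_equiv (Fin.consEquiv fun _ => Bool) _ g (fun q => rfl)).symm
    _ = ∑ b : Bool, ∑ y : Fin n → Bool, g (Fin.cons b y) :=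
        Fintype.sum_prod_type _

lemma sum_w (p : ℝ) : ∀ {n : ℕ}, ∑ x : Fin n → Bool, w p x = 1 := by
  intro n
  induction n with
  | zero => simp [w]
  | succ n ih =>
    rw [sum_succ (w p)]
    simp only [w_cons]
    rw [Fintype.sum_bool]
    simp only [← Finset.mul_sum, ih]
    norm_num

lemma cons_inf (b c : Bool) (y z : Fin n → Bool) :
    (Fin.cons b y ⊓ Fin.cons c z : Fin (n+1) → Bool) = Fin.cons (b && c) (y ⊓ z) := by
  funext j
  refine Fin.cases ?_ (fun i => ?_) j <;> simp [Pi.inf_apply]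

lemma conv (p q : ℝ) : ∀ {n : ℕ} (h : (Fin n → Bool) → ℝ),
    ∑ x : Fin n → Bool, w (p*q) x * h x
      = ∑ y : Fin n → Bool, ∑ z : Fin n → Bool, w p y * w q z * h (y ⊓ z) := by
  intro n
  induction n with
  | zero =>
    intro h
    have : ∀ x y : Fin 0 → Bool, x = y := fun x y => Subsingleton.elim x y
    simp [w, this (default ⊓ default) default]
  | succ n ih =>
    intro h
    rw [sum_succ (fun x => w (p*q) x * h x),
        sum_succ (fun y => ∑ z, w p y * w q z * h (y ⊓ z))]
    have rhsb : ∀ b : Bool,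
        (∑ y : Fin n → Bool, ∑ z : Fin (n+1) → Bool,
            w p (Fin.cons b y) * w q z * h (Fin.cons b y ⊓ z))
        = ∑ c : Bool, ((if b then p else 1-p) * (if c then q else 1-q)) *
            (∑ x : Fin n → Bool, w (p*q) x * h (Fin.cons (b && c) x)) := by
      intro b
      have inner : ∀ y : Fin n → Bool,
          (∑ z : Fin (n+1) → Bool, w p (Fin.cons b y) * w q z * h (Fin.cons b y ⊓ z))
          = ∑ c : Bool, ∑ z : Fin n → Bool,
              ((if b then p else 1-p) * (if c then q else 1-q)) *
                (w p y * w q z * h (Fin.cons (b && c) (y ⊓ z))) := by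
        intro y
        rw [sum_succ (fun z => w p (Fin.cons b y) * w q z * h (Fin.cons b y ⊓ z))]
        refine Finset.sum_congr rfl fun c _ => Finset.sum_congr rfl fun z _ => ?_
        rw [w_cons, w_cons, cons_inf]
        ring
      simp only [inner]
      rw [Finset.sum_comm]
      refine Finset.sum_congr rfl fun c _ => ?_
      simp only [← Finset.mul_sum]
      exact congrArg (fun t => ((if b = true then p else 1-p) * if c = true then q else 1-q) * t)
        (ih fun v => h (Fin.cons (b && c) v)).symm
    simp only [rhsb]
    have lhsb : ∀ b : Bool, (∑ y : Fin n → Bool, w (p*q) (Fin.cons b y) * h (Fin.cons b y))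
        = (if b then p*q else 1-p*q) * ∑ x : Fin n → Bool, w (p*q) x * h (Fin.cons b x) := by
      intro b
      simp only [w_cons, mul_assoc, ← Finset.mul_sum]
    simp only [lhsb]
    rw [Fintype.sum_bool, Fintype.sum_bool, Fintype.sum_bool, Fintype.sum_bool]
    simp only [Bool.and_true, Bool.and_false, Bool.true_and, Bool.false_and, if_true, if_false,
      Bool.false_eq_true, ite_true, ite_false]
    ring

def mu (p : ℝ) {n : ℕ} (E : (Fin n → Bool) → Prop) : ℝ :=
  ∑ x, w p x * (if E x then 1 else 0)

def UpClosed {n : ℕ} (E : (Fin n → Bool) → Prop) : Prop := ∀ ⦃x y⦄, x ≤ y → E x → E y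

lemma mu_nonneg {p : ℝ} (h0 : 0 ≤ p) (h1 : p ≤ 1) (E : (Fin n → Bool) → Prop) :
    0 ≤ mu p E :=
  Finset.sum_nonneg fun x _ => mul_nonneg (w_nonneg h0 h1 x) (by split <;> norm_num)

lemma mu_submul {p q : ℝ} (hp0 : 0 ≤ p) (hp1 : p ≤ 1) (hq0 : 0 ≤ q) (hq1 : q ≤ 1)
    {E : (Fin n → Bool) → Prop} (hE : UpClosed E) :
    mu (p*q) E ≤ mu p E * mu q E := by
  rw [mu, conv p q (fun x => if E x then 1 else 0)]
  rw [mu, mu, Finset.sum_mul_sum]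
  refine Finset.sum_le_sum fun y _ => Finset.sum_le_sum fun z _ => ?_
  have hy := w_nonneg hp0 hp1 y
  have hz := w_nonneg hq0 hq1 z
  have : (if E (y ⊓ z) then (1:ℝ) else 0) ≤ (if E y then (1:ℝ) else 0) * (if E z then 1 else 0) := by
    by_cases hyz : E (y ⊓ z)
    · rw [if_pos hyz, if_pos (hE inf_le_left hyz), if_pos (hE inf_le_right hyz)]; norm_num
    · rw [if_neg hyz]; positivity
  calc w p y * w q z * (if E (y ⊓ z) then (1:ℝ) else 0)
      ≤ w p y * w q z * ((if E y then (1:ℝ) else 0) * (if E z then 1 else 0)) := by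
        apply mul_le_mul_of_nonneg_left this (mul_nonneg hy hz)
    _ = w p y * (if E y then (1:ℝ) else 0) * (w q z * (if E z then 1 else 0)) := by ring

lemma mu_pow {p : ℝ} (hp0 : 0 ≤ p) (hp1 : p ≤ 1) {E : (Fin n → Bool) → Prop}
    (hE : UpClosed E) : ∀ m : ℕ, 1 ≤ m → mu (p^m) E ≤ (mu p E)^m := by
  intro m
  induction m with
  | zero => intro h; omega
  | succ m ih =>
    intro _
    rcases Nat.eq_or_lt_of_le (Nat.one_le_iff_ne_zero.mpr (by omega) : 1 ≤ m+1) with h | h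
    · rw [← h]; simp
    · have hm : 1 ≤ m := by omega
      have hpm0 : 0 ≤ p^m := pow_nonneg hp0 m
      have hpm1 : p^m ≤ 1 := pow_le_one₀ hp0 hp1
      calc mu (p^(m+1)) E = mu (p * p^m) E := by rw [pow_succ, mul_comm]
        _ ≤ mu p E * mu (p^m) E := mu_submul hp0 hp1 hpm0 hpm1 hE
        _ ≤ mu p E * (mu p E)^m :=
            mul_le_mul_of_nonneg_left (ih hm) (mu_nonneg hp0 hp1 E)
        _ = (mu p E)^(m+1) := by ring

lemma mu_half (E : (Fin n → Bool) → Prop) : mu (1/2) E = PrU E := by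
  rw [mu, PrU, EU]
  have hw : ∀ x : Fin n → Bool, w (1/2 : ℝ) x = (1/2)^n := by
    intro x
    rw [w]
    rw [Finset.prod_congr rfl (fun i _ => by norm_num : ∀ i ∈ univ, (if x i then (1/2:ℝ) else 1 - 1/2) = 1/2)]
    simp
  simp only [hw]
  rw [← Finset.mul_sum, div_pow, one_pow]
  rw [div_mul_eq_mul_div, one_mul]

lemma w_update (p : ℝ) (x : Fin n → Bool) (i : Fin n) (b : Bool) :
    w p (Function.update x i b)
      = (if b then p else 1 - p) * ∏ j ∈ univ.erase i, (if x j then p else 1 - p) := by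
  rw [w, ← Finset.mul_prod_erase univ _ (mem_univ i), Function.update_self]
  congr 1
  refine Finset.prod_congr rfl fun j hj => ?_
  rw [Function.update_of_ne (Finset.ne_of_mem_erase hj)]

lemma w_flip (p : ℝ) (x : Fin n → Bool) (i : Fin n) :
    (1 - p) * w p (Function.update x i true) = p * w p (Function.update x i false) := by
  rw [w_update, w_update, if_pos rfl, if_neg Bool.false_ne_true]
  ring

/-- If `E` doesn't depend on coordinate `i`, the measure of `E ∧ xᵢ = false` is `(1-p)·μ(E)`. -/

lemma mu_slice (p : ℝ) (E : (Fin n → Bool) → Prop) (i : Fin n)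
    (hind : ∀ x b, E (Function.update x i b) ↔ E x) :
    ∑ x, w p x * (if x i = false ∧ E x then 1 else 0) = (1 - p) * mu p E := by
  classical
  set ι : Equiv.Perm (Fin n → Bool) :=
    Function.Involutive.toPerm (fun x => Function.update x i (!(x i)))
      (by
        intro x
        simp [Function.update_idem, Function.update_self]) with hι
  have hιap : ∀ x : Fin n → Bool, ι x = Function.update x i (!(x i)) := fun x => rfl
  set A : ℝ := ∑ x, w p x * (if x i = false ∧ E x then 1 else 0) with hA
  set T : ℝ := ∑ x, w p x * (if x i = true ∧ E x then 1 else 0) with hT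
  have hsplit : mu p E = A + T := by
    rw [mu, hA, hT, ← Finset.sum_add_distrib]
    refine Finset.sum_congr rfl fun x _ => ?_
    rw [← mul_add]
    congr 1
    by_cases hE : E x
    · cases hx : x i <;> simp [hx, hE]
    · simp [hE]
  have hTA : (1 - p) * T = p * A := by
    have hre : T = ∑ x, w p (Function.update x i true) * (if x i = false ∧ E x then 1 else 0) := by
      rw [hT]
      rw [← Equiv.sum_comp ι (fun x => w p x * (if x i = true ∧ E x then 1 else 0))]
      refine Finset.sum_congr rfl fun x _ => ?_
      rw [hιap]
      by_cases hx : x i = false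
      · have hb : (!(x i)) = true := by rw [hx]; rfl
        rw [hb]
        by_cases hE : E x
        · rw [if_pos ⟨Function.update_self i true x, (hind x true).mpr hE⟩, if_pos ⟨hx, hE⟩]
        · rw [if_neg (fun hcon => hE ((hind x true).mp hcon.2)),
              if_neg (fun hcon => hE hcon.2)]
      · have hx' : x i = true := by revert hx; cases x i <;> simp
        have hb : (!(x i)) = false := by rw [hx']; rfl
        rw [hb]
        rw [if_neg (fun hcon => Bool.false_ne_true ((Function.update_self i false x) ▸ hcon.1)),
            if_neg (fun hcon => hx hcon.1)]
        rw [mul_zero, mul_zero]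
    rw [hre, hA, Finset.mul_sum, Finset.mul_sum]
    refine Finset.sum_congr rfl fun x _ => ?_
    by_cases hc : x i = false ∧ E x
    · rw [if_pos hc, mul_one, mul_one]
      have hx0 : x = Function.update x i false := by
        conv_lhs => rw [← Function.update_eq_self i x]
        rw [hc.1]
      conv_rhs => rw [hx0]
      exact w_flip p x i
    · rw [if_neg hc]; ring
  -- A = (1-p) * (A + T)
  rw [hsplit]
  nlinarith [hTA]

lemma d1_antitone {f : (Fin n → Bool) → ℝ} (hf : Submodular f) {x y : Fin n → Bool}
    (hxy : x ≤ y) (i : Fin n) : d1 f i y ≤ d1 f i x := by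
  have key := hf (Function.update x i true) (Function.update y i false)
  have hsup : Function.update x i true ⊔ Function.update y i false = Function.update y i true := by
    funext j
    rcases eq_or_ne j i with rfl | hj
    · simp [Pi.sup_apply]
    · simp [Pi.sup_apply, Function.update_of_ne hj, sup_eq_right.mpr (hxy j)]
  have hinf : Function.update x i true ⊓ Function.update y i false = Function.update x i false := by
    funext j
    rcases eq_or_ne j i with rfl | hj
    · simp [Pi.inf_apply]
    · simp [Pi.inf_apply, Function.update_of_ne hj, inf_eq_left.mpr (hxy j)]
  rw [hsup, hinf] at key
  rw [d1, d1]
  linarith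

lemma d1_update {f : (Fin n → Bool) → ℝ} (i : Fin n) (x : Fin n → Bool) (b : Bool) :
    d1 f i (Function.update x i b) = d1 f i x := by
  rw [d1, d1, Function.update_idem, Function.update_idem]

lemma upclosed_neg {f : (Fin n → Bool) → ℝ} (hf : Submodular f) (i : Fin n) (ε' : ℝ) :
    ∀ ⦃x y : Fin n → Bool⦄, x ≤ y → d1 f i x ≤ -ε' → d1 f i y ≤ -ε' :=
  fun x y hxy h => le_trans (d1_antitone hf hxy i) h

/-- Turn on all coordinates of `S`. -/

def updS {n : ℕ} (x : Fin n → Bool) (S : Finset (Fin n)) : Fin n → Bool :=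
  fun j => if j ∈ S then true else x j

lemma le_updS (x : Fin n → Bool) (S : Finset (Fin n)) : x ≤ updS x S := by
  intro j
  rw [updS]
  split
  · exact Bool.le_true _
  · exact le_refl _

lemma updS_insert (x : Fin n → Bool) (S : Finset (Fin n)) (i : Fin n) :
    updS x (insert i S) = Function.update (updS x S) i true := by
  funext j
  rcases eq_or_ne j i with rfl | hj
  · simp [updS]
  · simp [updS, Function.update_of_ne hj, hj]

lemma telescope {f : (Fin n → Bool) → ℝ} (hf : Submodular f) {ε' : ℝ}
    (x : Fin n → Bool) :
    ∀ S : Finset (Fin n), (∀ i ∈ S, x i = false ∧ d1 f i x ≤ -ε') →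
      f (updS x S) ≤ f x - S.card * ε' := by
  intro S
  induction S using Finset.induction_on with
  | empty =>
    intro _
    have he : updS x ∅ = x := by funext j; simp [updS]
    rw [he]
    simp
  | @insert i S hiS ih =>
    intro hS
    have hxi : x i = false := (hS i (mem_insert_self i S)).1
    have hdi : d1 f i x ≤ -ε' := (hS i (mem_insert_self i S)).2
    have hrest := ih (fun j hj => hS j (mem_insert_of_mem hj))
    have hu : (updS x S) i = false := by
      rw [updS]
      simp [hiS, hxi]
    have hfix : Function.update (updS x S) i false = updS x S := by
      conv_rhs => rw [← Function.update_eq_self i (updS x S)]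
      rw [hu]
    have hstep : f (updS x (insert i S)) = f (updS x S) + d1 f i (updS x S) := by
      rw [updS_insert, d1, hfix]
      ring
    have hanti : d1 f i (updS x S) ≤ d1 f i x := d1_antitone hf (le_updS x S) i
    rw [hstep, Finset.card_insert_of_notMem hiS]
    push_cast
    linarith

lemma pointwise_count {f : (Fin n → Bool) → ℝ} (hf : Submodular f)
    (hr : ∀ x, f x ∈ Set.Icc (0:ℝ) 1) {ε' : ℝ} (x : Fin n → Bool) :
    ((univ.filter (fun i => x i = false ∧ d1 f i x ≤ -ε')).card : ℝ) * ε' ≤ 1 := by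
  set S := univ.filter (fun i => x i = false ∧ d1 f i x ≤ -ε') with hSdef
  have hS : ∀ i ∈ S, x i = false ∧ d1 f i x ≤ -ε' := fun i hi => (Finset.mem_filter.mp hi).2
  have h1 := telescope hf x S hS
  have h2 := (hr (updS x S)).1
  have h3 := (hr x).2
  linarith

lemma geom_aux : ∀ (y : ℝ), 0 ≤ y → y ≤ 1 → ∀ m : ℕ, 1 - y^m ≤ m * (1 - y) := by
  intro y h0 h1 m
  induction m with
  | zero => simp
  | succ m ih =>
    have hym : 0 ≤ 1 - y^m := by
      have := pow_le_one₀ h0 h1 (n := m); linarith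
    have : y * (1 - y^m) ≤ 1 - y^m := by nlinarith
    have hexp : 1 - y^(m+1) = (1-y) + y * (1 - y^m) := by ring
    push_cast
    nlinarith

lemma count_neg (f : (Fin n → Bool) → ℝ) (hsub : Submodular f)
    (hr : ∀ x, f x ∈ Set.Icc (0:ℝ) 1) {ε' δ : ℝ} (hε' : 0 < ε') (hδ : 0 < δ)
    {m : ℕ} (hm1 : 1 ≤ m) (hm : Real.log (1/δ) ≤ m) :
    ((univ.filter (fun i : Fin n => δ ≤ PrU (fun x => d1 f i x ≤ -ε'))).card : ℝ)
      ≤ 2 * m * Real.exp 1 / ε' := by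
  set B := univ.filter (fun i : Fin n => δ ≤ PrU (fun x => d1 f i x ≤ -ε')) with hB
  have hm0 : (0:ℝ) < m := by exact_mod_cast Nat.lt_of_lt_of_le Nat.zero_lt_one hm1
  set p : ℝ := (2:ℝ) ^ (-(m:ℝ)⁻¹) with hp
  have hp0 : 0 < p := Real.rpow_pos_of_pos two_pos _
  have hp1 : p ≤ 1 := Real.rpow_le_one_of_one_le_of_nonpos one_le_two
    (by simp [inv_nonneg, hm0.le])
  have hpm : p ^ m = 1/2 := by
    rw [hp, ← Real.rpow_natCast ((2:ℝ) ^ (-(m:ℝ)⁻¹)) m, ← Real.rpow_mul (by norm_num : (0:ℝ) ≤ 2)]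
    rw [neg_mul, inv_mul_cancel₀ (ne_of_gt hm0)]
    rw [Real.rpow_neg_one]
    norm_num
  have hterm : ∀ i ∈ B, (1/(2*m)) * Real.exp (-1)
      ≤ (1-p) * mu p (fun x => d1 f i x ≤ -ε') := by
    intro i hiB
    set E := fun x : Fin n → Bool => d1 f i x ≤ -ε' with hE
    have hup : UpClosed E := fun x y hxy hx => le_trans (d1_antitone hsub hxy i) hx
    have hδE : δ ≤ mu (1/2) E := by rw [mu_half]; exact (Finset.mem_filter.mp hiB).2
    have hpow : δ ≤ (mu p E)^m := by
      rw [← hpm] at hδE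
      exact le_trans hδE (mu_pow hp0.le hp1 hup m hm1)
    have hmup0 : 0 ≤ mu p E := mu_nonneg hp0.le hp1 E
    have h1 : Real.exp (-1) ≤ mu p E := by
      have hroot : δ ^ ((m:ℝ)⁻¹) ≤ mu p E := by
        have := Real.rpow_le_rpow hδ.le hpow (inv_nonneg.mpr hm0.le)
        rwa [← Real.rpow_natCast (mu p E) m, ← Real.rpow_mul hmup0,
          mul_inv_cancel₀ (ne_of_gt hm0), Real.rpow_one] at this
      refine le_trans ?_ hroot
      rw [Real.rpow_def_of_pos hδ]
      apply Real.exp_le_exp.mpr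
      have hlog : -Real.log δ ≤ m := by
        rwa [one_div, Real.log_inv] at hm
      rw [neg_le] at hlog
      calc (-1 : ℝ) = (-(m:ℝ)) * (m:ℝ)⁻¹ := by field_simp
        _ ≤ Real.log δ * (m:ℝ)⁻¹ :=
            mul_le_mul_of_nonneg_right hlog (inv_nonneg.mpr hm0.le)
    have h2 : 1/(2*(m:ℝ)) ≤ 1 - p := by
      have hg := geom_aux p hp0.le hp1 m
      rw [hpm] at hg
      rw [div_le_iff₀ (by positivity)]
      nlinarith
    have he0 : (0:ℝ) < Real.exp (-1) := Real.exp_pos _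
    calc (1/(2*(m:ℝ))) * Real.exp (-1) ≤ (1-p) * Real.exp (-1) :=
          mul_le_mul_of_nonneg_right h2 he0.le
      _ ≤ (1-p) * mu p E := mul_le_mul_of_nonneg_left h1 (by linarith)
  have hsum : ∑ i ∈ B, (1-p) * mu p (fun x => d1 f i x ≤ -ε') ≤ 1/ε' := by
    have heq : ∀ i ∈ B, (1-p) * mu p (fun x => d1 f i x ≤ -ε')
        = ∑ x, w p x * (if x i = false ∧ d1 f i x ≤ -ε' then 1 else 0) := by
      intro i _
      exact (mu_slice p (fun x => d1 f i x ≤ -ε') i (fun x b => by simp only [d1_update])).symm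
    rw [Finset.sum_congr rfl heq, Finset.sum_comm]
    have hpt : ∀ x : Fin n → Bool,
        (∑ i ∈ B, (if x i = false ∧ d1 f i x ≤ -ε' then (1:ℝ) else 0)) ≤ 1/ε' := by
      intro x
      rw [Finset.sum_boole]
      have hcard : (B.filter (fun i => x i = false ∧ d1 f i x ≤ -ε')).card
          ≤ (univ.filter (fun i => x i = false ∧ d1 f i x ≤ -ε')).card :=
        Finset.card_le_card (Finset.filter_subset_filter _ (Finset.subset_univ B))
      have := pointwise_count hsub hr (ε' := ε') x
      rw [le_div_iff₀ hε']
      calc ((B.filter (fun i => x i = false ∧ d1 f i x ≤ -ε')).card : ℝ) * ε'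
          ≤ ((univ.filter (fun i => x i = false ∧ d1 f i x ≤ -ε')).card : ℝ) * ε' := by
            apply mul_le_mul_of_nonneg_right _ hε'.le
            exact_mod_cast hcard
        _ ≤ 1 := this
    calc ∑ x : Fin n → Bool, ∑ i ∈ B, w p x * (if x i = false ∧ d1 f i x ≤ -ε' then (1:ℝ) else 0)
        = ∑ x : Fin n → Bool, w p x * ∑ i ∈ B, (if x i = false ∧ d1 f i x ≤ -ε' then (1:ℝ) else 0) := by
          exact Finset.sum_congr rfl fun x _ => (Finset.mul_sum _ _ _).symm
      _ ≤ ∑ x : Fin n → Bool, w p x * (1/ε') :=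
          Finset.sum_le_sum fun x _ =>
            mul_le_mul_of_nonneg_left (hpt x) (w_nonneg hp0.le hp1 x)
      _ = 1/ε' := by rw [← Finset.sum_mul, sum_w, one_mul]
  have hmain : (B.card : ℝ) * ((1/(2*(m:ℝ))) * Real.exp (-1)) ≤ 1/ε' := by
    calc (B.card : ℝ) * ((1/(2*(m:ℝ))) * Real.exp (-1))
        = ∑ _i ∈ B, (1/(2*(m:ℝ))) * Real.exp (-1) := by
          rw [Finset.sum_const, nsmul_eq_mul]
      _ ≤ ∑ i ∈ B, (1-p) * mu p (fun x => d1 f i x ≤ -ε') := Finset.sum_le_sum hterm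
      _ ≤ 1/ε' := hsum
  have hc0 : (0:ℝ) < (1/(2*(m:ℝ))) * Real.exp (-1) := by positivity
  rw [← le_div_iff₀ hc0] at hmain
  refine le_trans hmain (le_of_eq ?_)
  rw [Real.exp_neg]
  field_simp

lemma PrU_nonneg (P : (Fin n → Bool) → Prop) : 0 ≤ PrU P := by
  rw [PrU, EU]
  apply div_nonneg _ (by positivity)
  exact Finset.sum_nonneg fun x _ => by split <;> norm_num

lemma PrU_mono' {P Q : (Fin n → Bool) → Prop} (h : ∀ x, P x → Q x) : PrU P ≤ PrU Q := by
  rw [PrU, PrU, EU, EU]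
  have hs : (∑ x : Fin n → Bool, if P x then (1:ℝ) else 0)
      ≤ ∑ x : Fin n → Bool, if Q x then (1:ℝ) else 0 := by
    refine Finset.sum_le_sum fun x _ => ?_
    by_cases hP : P x
    · rw [if_pos hP, if_pos (h x hP)]
    · rw [if_neg hP]; split <;> norm_num
  gcongr

lemma PrU_congr {P Q : (Fin n → Bool) → Prop} (h : ∀ x, P x ↔ Q x) : PrU P = PrU Q :=
  le_antisymm (PrU_mono' fun x => (h x).mp) (PrU_mono' fun x => (h x).mpr)

lemma PrU_union {P Q R : (Fin n → Bool) → Prop} (h : ∀ x, P x → Q x ∨ R x) :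
    PrU P ≤ PrU Q + PrU R := by
  rw [PrU, PrU, PrU, EU, EU, EU, ← add_div]
  gcongr
  · rw [← Finset.sum_add_distrib]
    refine Finset.sum_le_sum fun x _ => ?_
    by_cases hP : P x
    · rcases h x hP with hq | hr
      · rw [if_pos hP, if_pos hq]
        have : (0:ℝ) ≤ if R x then 1 else 0 := by split <;> norm_num
        linarith
      · rw [if_pos hP, if_pos hr]
        have : (0:ℝ) ≤ if Q x then 1 else 0 := by split <;> norm_num
        linarith
    · rw [if_neg hP]
      have h1 : (0:ℝ) ≤ if Q x then 1 else 0 := by split <;> norm_num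
      have h2 : (0:ℝ) ≤ if R x then 1 else 0 := by split <;> norm_num
      linarith

/-- complement map -/

def cpl {n : ℕ} (x : Fin n → Bool) : Fin n → Bool := fun j => !(x j)

lemma cpl_invol : Function.Involutive (cpl (n := n)) := by
  intro x; funext j; simp [cpl]

lemma cpl_update (x : Fin n → Bool) (i : Fin n) (b : Bool) :
    cpl (Function.update x i b) = Function.update (cpl x) i (!b) := by
  funext j
  rcases eq_or_ne j i with rfl | hj
  · simp [cpl]
  · simp [cpl, Function.update_of_ne hj]

lemma cpl_sup (x y : Fin n → Bool) : cpl (x ⊔ y) = cpl x ⊓ cpl y := by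
  funext j
  show (!(x j || y j)) = ((!(x j)) && (!(y j)))
  cases x j <;> cases y j <;> rfl

lemma cpl_inf (x y : Fin n → Bool) : cpl (x ⊓ y) = cpl x ⊔ cpl y := by
  funext j
  show (!(x j && y j)) = ((!(x j)) || (!(y j)))
  cases x j <;> cases y j <;> rfl

lemma PrU_cpl (P : (Fin n → Bool) → Prop) : PrU (fun x => P (cpl x)) = PrU P := by
  rw [PrU, PrU, EU, EU]
  congr 1
  exact Equiv.sum_comp (cpl_invol.toPerm) (fun x => if P x then (1:ℝ) else 0)

lemma d1_cpl (f : (Fin n → Bool) → ℝ) (i : Fin n) (x : Fin n → Bool) :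
    d1 (fun y => f (cpl y)) i x = -(d1 f i (cpl x)) := by
  show f (cpl (Function.update x i true)) - f (cpl (Function.update x i false)) = _
  rw [cpl_update, cpl_update]
  show f (Function.update (cpl x) i false) - f (Function.update (cpl x) i true) = _
  rw [d1]
  ring

lemma count_pos (f : (Fin n → Bool) → ℝ) (hsub : Submodular f)
    (hr : ∀ x, f x ∈ Set.Icc (0:ℝ) 1) {ε' δ : ℝ} (hε' : 0 < ε') (hδ : 0 < δ)
    {m : ℕ} (hm1 : 1 ≤ m) (hm : Real.log (1/δ) ≤ m) :
    ((univ.filter (fun i : Fin n => δ ≤ PrU (fun x => ε' ≤ d1 f i x))).card : ℝ)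
      ≤ 2 * m * Real.exp 1 / ε' := by
  set g : (Fin n → Bool) → ℝ := fun y => f (cpl y) with hg
  have hgsub : Submodular g := by
    intro x y
    show f (cpl (x ⊔ y)) + f (cpl (x ⊓ y)) ≤ f (cpl x) + f (cpl y)
    rw [cpl_sup, cpl_inf]
    have := hsub (cpl x) (cpl y)
    linarith
  have hgr : ∀ x, g x ∈ Set.Icc (0:ℝ) 1 := fun x => hr (cpl x)
  have hkey : ∀ i : Fin n, PrU (fun x => d1 g i x ≤ -ε') = PrU (fun x => ε' ≤ d1 f i x) := by
    intro i
    have h1 : PrU (fun x => d1 g i x ≤ -ε') = PrU (fun x => ε' ≤ d1 f i (cpl x)) := by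
      apply PrU_congr
      intro x
      rw [hg, d1_cpl]
      constructor <;> intro h <;> linarith
    rw [h1]
    exact PrU_cpl (fun x => ε' ≤ d1 f i x)
  have hfe : (univ.filter (fun i : Fin n => δ ≤ PrU (fun x => ε' ≤ d1 f i x)))
      = (univ.filter (fun i : Fin n => δ ≤ PrU (fun x => d1 g i x ≤ -ε'))) := by
    apply Finset.filter_congr
    intro i _
    rw [hkey i]
  rw [hfe]
  exact count_neg g hgsub hgr hε' hδ hm1 hm

lemma tnorm_prob {h : (Fin n → Bool) → ℝ} {ε : ℝ} (hε : 0 < ε) (ht : ε ≤ tnorm h) :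
    (ε/2)^3 ≤ PrU (fun x => ε/2 ≤ |h x|) := by
  have hne : Set.Nonempty {α : ℝ | 0 ≤ α ∧ α^3 ≤ PrU (fun x => α ≤ |h x|)} := by
    refine ⟨0, le_refl 0, ?_⟩
    rw [pow_succ]
    simpa using PrU_nonneg (fun x => (0:ℝ) ≤ |h x|)
  have hlt : ε/2 < tnorm h := lt_of_lt_of_le (by linarith) ht
  obtain ⟨α, hαS, hlt2⟩ := exists_lt_of_lt_csSup hne hlt
  obtain ⟨hα0, hαP⟩ := hαS
  calc (ε/2)^3 ≤ α^3 := pow_le_pow_left₀ (by linarith) hlt2.le 3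
    _ ≤ PrU (fun x => α ≤ |h x|) := hαP
    _ ≤ PrU (fun x => ε/2 ≤ |h x|) := PrU_mono' fun x hx => le_trans hlt2.le hx

lemma numeric_aux {mR L ε : ℝ} (hm0 : 0 ≤ mR) (hε0 : 0 < ε)
    (hmfin : mR ≤ 3*L + Real.log 2 + 2) (hL : Real.log 2 ≤ L) :
    2 * mR * Real.exp 1 / (ε/2) * 2 ≤ 200 / ε * L := by
  have he1 : Real.exp 1 < 2.7182818286 := Real.exp_one_lt_d9
  have he0 : (0:ℝ) < Real.exp 1 := Real.exp_pos 1
  have hlog2 : (0.6931471803:ℝ) < Real.log 2 := Real.log_two_gt_d9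
  have hlog2' : Real.log 2 < 0.6931471808 := Real.log_two_lt_d9
  have step1 : 4*Real.exp 1*mR ≤ 4*Real.exp 1*(3*L + Real.log 2 + 2) :=
    mul_le_mul_of_nonneg_left hmfin (by positivity)
  have step3 : 4*Real.exp 1*(Real.log 2 + 2) ≤ 30 := by nlinarith
  have step4 : (100 - 12*Real.exp 1)*Real.log 2 ≤ (100 - 12*Real.exp 1)*L :=
    mul_le_mul_of_nonneg_left hL (by nlinarith)
  have step5 : (40:ℝ) ≤ (100 - 12*Real.exp 1)*Real.log 2 := by nlinarith
  have hnum : 8*mR*Real.exp 1 ≤ 200*L := by nlinarith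
  have hfrac : 2*mR*Real.exp 1/(ε/2)*2 = (8*mR*Real.exp 1)/ε := by
    field_simp
    ring
  rw [hfrac, div_mul_eq_mul_div]
  gcongr

end S8
end S8sec

open Classical in
/-- There is a universal C > 0 such that for every submodular
f : {0,1}^n → [0,1] and 0 < ε < 1, the number of coordinates with ‖∂_i f‖_T ≥ ε
is at most (C/ε)·log(2/ε). -/
theorem stmt8 : ∃ C : ℝ, 0 < C ∧ ∀ (n : ℕ) (f : (Fin n → Bool) → ℝ),
    Submodular f → (∀ x, f x ∈ Set.Icc (0 : ℝ) 1) → ∀ ε : ℝ, 0 < ε → ε < 1 →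
    ((Finset.univ.filter (fun i : Fin n => ε ≤ tnorm (d1 f i))).card : ℝ)
      ≤ C / ε * Real.log (2 / ε) := by
  refine ⟨200, by norm_num, ?_⟩
  intro n f hsub hr ε hε0 hε1
  have hε' : (0:ℝ) < ε/2 := by linarith
  set δ : ℝ := (ε/2)^3/2 with hδdef
  have hδ : 0 < δ := by positivity
  have hδ1 : δ ≤ 1 := by
    have h2 : (ε/2) ≤ 1 := by linarith
    have h3 : (ε/2)^3 ≤ 1 := pow_le_one₀ (by positivity) h2
    rw [hδdef]; linarith
  set m : ℕ := ⌈Real.log (1/δ)⌉₊ + 1 with hmdef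
  have hm1 : 1 ≤ m := by omega
  have hlog0 : 0 ≤ Real.log (1/δ) := Real.log_nonneg (by
    rw [le_div_iff₀ hδ]; linarith)
  have hmln : Real.log (1/δ) ≤ (m:ℝ) := by
    calc Real.log (1/δ) ≤ (⌈Real.log (1/δ)⌉₊ : ℝ) := Nat.le_ceil _
      _ ≤ (m:ℝ) := by rw [hmdef]; push_cast; linarith
  have hmub : (m:ℝ) ≤ Real.log (1/δ) + 2 := by
    have := Nat.ceil_lt_add_one hlog0
    rw [hmdef]
    push_cast
    linarith
  set Bp := univ.filter (fun i : Fin n => δ ≤ PrU (fun x => ε/2 ≤ d1 f i x)) with hBp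
  set Bm := univ.filter (fun i : Fin n => δ ≤ PrU (fun x => d1 f i x ≤ -(ε/2))) with hBm
  have hsubset : univ.filter (fun i : Fin n => ε ≤ tnorm (d1 f i)) ⊆ Bp ∪ Bm := by
    intro i hi
    have hti : ε ≤ tnorm (d1 f i) := (Finset.mem_filter.mp hi).2
    have h3 := S8.tnorm_prob hε0 hti
    have hun := S8.PrU_union (P := fun x => ε/2 ≤ |d1 f i x|)
      (Q := fun x => ε/2 ≤ d1 f i x) (R := fun x => d1 f i x ≤ -(ε/2)) (fun x hx => by
        have hx' : ε/2 ≤ |d1 f i x| := hx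
        rcases abs_cases (d1 f i x) with ⟨ha, _⟩ | ⟨ha, _⟩
        · left; show ε/2 ≤ d1 f i x; rw [ha] at hx'; exact hx'
        · right; show d1 f i x ≤ -(ε/2); rw [ha] at hx'; linarith)
    by_cases hq : δ ≤ PrU (fun x => ε/2 ≤ d1 f i x)
    · exact Finset.mem_union.mpr (Or.inl (Finset.mem_filter.mpr ⟨Finset.mem_univ i, hq⟩))
    · have hrr : δ ≤ PrU (fun x => d1 f i x ≤ -(ε/2)) := by
        push_neg at hq
        have : (ε/2)^3 = 2 * δ := by rw [hδdef]; ring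
        linarith
      exact Finset.mem_union.mpr (Or.inr (Finset.mem_filter.mpr ⟨Finset.mem_univ i, hrr⟩))
  have hcard : ((univ.filter (fun i : Fin n => ε ≤ tnorm (d1 f i))).card : ℝ)
      ≤ (Bp.card : ℝ) + (Bm.card : ℝ) := by
    have h1 := Finset.card_le_card hsubset
    have h2 := Finset.card_union_le Bp Bm
    push_cast
    exact_mod_cast le_trans h1 h2
  have hbp := S8.count_pos f hsub hr hε' hδ hm1 hmln
  have hbm := S8.count_neg f hsub hr hε' hδ hm1 hmln
  have he1 : Real.exp 1 < 2.7182818286 := Real.exp_one_lt_d9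
  have he0 : (0:ℝ) < Real.exp 1 := Real.exp_pos 1
  have hlog2 : (0.6931471803:ℝ) < Real.log 2 := Real.log_two_gt_d9
  have hlog2' : Real.log 2 < 0.6931471808 := Real.log_two_lt_d9
  have hL : Real.log 2 ≤ Real.log (2/ε) := by
    apply Real.log_le_log (by norm_num)
    rw [le_div_iff₀ hε0]
    linarith
  have hδlog : Real.log (1/δ) = Real.log 2 + 3 * Real.log (2/ε) := by
    have hval : (1:ℝ)/δ = 2 * (2/ε)^3 := by
      rw [hδdef]
      field_simp
    rw [hval, Real.log_mul two_ne_zero (by positivity), Real.log_pow]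
    push_cast
    ring
  set L := Real.log (2/ε) with hLdef
  have hmfin : (m:ℝ) ≤ 3*L + Real.log 2 + 2 := by
    rw [hδlog] at hmub
    linarith
  have hkey : 2 * ((m:ℝ)) * Real.exp 1 / (ε/2) * 2 ≤ 200 / ε * L :=
    S8.numeric_aux (Nat.cast_nonneg m) hε0 hmfin hL
  calc ((univ.filter (fun i : Fin n => ε ≤ tnorm (d1 f i))).card : ℝ)
      ≤ (Bp.card : ℝ) + (Bm.card : ℝ) := hcard
    _ ≤ 2 * (m:ℝ) * Real.exp 1 / (ε/2) * 2 := by linarith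
    _ ≤ 200 / ε * L := hkey
end

section
/- For any function h : {0,1}^n → [−1,1], the ℓ₂ norm is bounded by the threshold norm as ‖h‖₂ ≤ √2 · ‖h‖_T. -/
open Finset

lemma EU_mono {n : ℕ} {f g : (Fin n → Bool) → ℝ} (hfg : ∀ x, f x ≤ g x) :
    EU f ≤ EU g := by
  unfold EU
  have hs : ∑ x : Fin n → Bool, f x ≤ ∑ x : Fin n → Bool, g x :=
    Finset.sum_le_sum (fun x _ => hfg x)
  gcongr

lemma EU_const {n : ℕ} (c : ℝ) : EU (fun _ : Fin n → Bool => c) = c := by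
  simp [EU, Finset.sum_const, Finset.card_univ, Fintype.card_fun, mul_comm]

open Classical in
lemma PrU_nonneg {n : ℕ} (P : (Fin n → Bool) → Prop) : 0 ≤ PrU P := by
  have := EU_mono (n := n) (f := fun _ => (0 : ℝ))
    (g := fun x => if P x then (1 : ℝ) else 0) (by intro x; by_cases hx : P x <;> simp [hx])
  simpa [PrU, EU_const] using this

open Classical in
lemma PrU_le_one {n : ℕ} (P : (Fin n → Bool) → Prop) : PrU P ≤ 1 := by
  have := EU_mono (n := n) (g := fun _ => (1 : ℝ))
    (f := fun x => if P x then (1 : ℝ) else 0) (by intro x; by_cases hx : P x <;> simp [hx])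
  simpa [PrU, EU_const] using this

lemma EU_add {n : ℕ} (f g : (Fin n → Bool) → ℝ) :
    EU (fun x => f x + g x) = EU f + EU g := by
  simp [EU, Finset.sum_add_distrib, add_div]

/-- For any h : {0,1}^n → [−1,1], ‖h‖₂ ≤ √2 ‖h‖_T. -/
theorem stmt9 {n : ℕ} (h : (Fin n → Bool) → ℝ)
    (hr : ∀ x, h x ∈ Set.Icc (-1 : ℝ) 1) :
    l2norm h ≤ Real.sqrt 2 * tnorm h := by
  classical
  set S : Set ℝ := {α : ℝ | 0 ≤ α ∧ α ^ 3 ≤ PrU (fun x => α ≤ |h x|)} with hS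
  have h0S : (0 : ℝ) ∈ S := ⟨le_refl 0, by simpa using PrU_nonneg (n := n) _⟩
  have hbdd : BddAbove S := by
    refine ⟨1, fun α hα => ?_⟩
    rcases hα with ⟨hα0, hα3⟩
    by_contra hc
    push_neg at hc
    have h1 : (1 : ℝ) < α ^ 3 := one_lt_pow₀ hc (by norm_num)
    have := PrU_le_one (n := n) (fun x => α ≤ |h x|)
    linarith
  set t := tnorm h with ht
  have htS : t = sSup S := rfl
  have ht0 : 0 ≤ t := le_csSup hbdd h0S
  have ht1 : t ≤ 1 := csSup_le ⟨0, h0S⟩ (by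
    intro α hα
    rcases hα with ⟨hα0, hα3⟩
    by_contra hc
    push_neg at hc
    have h1 : (1 : ℝ) < α ^ 3 := one_lt_pow₀ hc (by norm_num)
    have := PrU_le_one (n := n) (fun x => α ≤ |h x|)
    linarith)
  have habs : ∀ x, |h x| ≤ 1 := fun x => abs_le.2 ⟨(hr x).1, (hr x).2⟩
  -- key pointwise/expectation bound for α > t
  have key : ∀ α : ℝ, t < α → EU (fun x => h x ^ 2) ≤ α ^ 2 + α ^ 3 := by
    intro α hα
    have hα0 : 0 ≤ α := le_trans ht0 hα.le
    have hnotS : α ∉ S := fun hmem => absurd (le_csSup hbdd hmem) (not_le.2 hα)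
    have hPr : PrU (fun x => α ≤ |h x|) < α ^ 3 := by
      by_contra hc
      push_neg at hc
      exact hnotS ⟨hα0, hc⟩
    have hpt : ∀ x, h x ^ 2 ≤ α ^ 2 + (if α ≤ |h x| then (1 : ℝ) else 0) := by
      intro x
      by_cases hx : α ≤ |h x|
      · simp only [hx, if_pos]
        have := habs x
        nlinarith [sq_abs (h x)]
      · simp only [hx, if_neg, not_false_iff, add_zero]
        push_neg at hx
        nlinarith [sq_abs (h x), abs_nonneg (h x)]
    calc EU (fun x => h x ^ 2)
        ≤ EU (fun x => α ^ 2 + (if α ≤ |h x| then (1 : ℝ) else 0)) := EU_mono hpt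
      _ = α ^ 2 + PrU (fun x => α ≤ |h x|) := by
          rw [EU_add]; rw [EU_const]; rfl
      _ ≤ α ^ 2 + α ^ 3 := by linarith
  have hE : EU (fun x => h x ^ 2) ≤ t ^ 2 + t ^ 3 := by
    refine le_of_forall_pos_le_add ?_
    intro ε hε
    set δ := min (ε / 10) 1 with hδ
    have hδ0 : 0 < δ := lt_min (by linarith) one_pos
    have hδ1 : δ ≤ 1 := min_le_right _ _
    have hδε : δ ≤ ε / 10 := min_le_left _ _
    have hk := key (t + δ) (by linarith)
    have hb : (t + δ) ^ 2 + (t + δ) ^ 3 ≤ t ^ 2 + t ^ 3 + 10 * δ := by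
      nlinarith [mul_nonneg (sub_nonneg.2 ht1) hδ0.le, mul_nonneg ht0 hδ0.le,
        mul_nonneg (mul_nonneg ht0 ht0) hδ0.le,
        mul_nonneg (mul_nonneg ht0 hδ0.le) hδ0.le,
        mul_nonneg (mul_nonneg hδ0.le hδ0.le) hδ0.le,
        mul_nonneg (mul_nonneg (sub_nonneg.2 ht1) ht0) hδ0.le,
        mul_nonneg (mul_nonneg (sub_nonneg.2 ht1) hδ0.le) hδ0.le,
        mul_nonneg (mul_nonneg (sub_nonneg.2 hδ1) hδ0.le) hδ0.le,
        mul_nonneg (mul_nonneg ht0 ht0) ht0, sq_nonneg t, sq_nonneg δ,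
        mul_nonneg (sub_nonneg.2 hδ1) hδ0.le]
    linarith
  have hE2 : EU (fun x => h x ^ 2) ≤ 2 * t ^ 2 := by nlinarith
  have : l2norm h ≤ Real.sqrt (2 * t ^ 2) := Real.sqrt_le_sqrt hE2
  calc l2norm h ≤ Real.sqrt (2 * t ^ 2) := this
    _ = Real.sqrt 2 * t := by
        rw [Real.sqrt_mul (by norm_num), Real.sqrt_sq ht0]
end

section
/- For any XOS function f : {0,1}^n → ℝ₊, the total influence satisfies Σ_{i=1}^n E_{x∼U}[ |∂_i f(x)| ] ≤ 2 · E_{x∼U}[ f(x) ]; equivalently, Σ_{i=1}^n ‖(1/2)∂_i f‖₁ ≤ ‖f‖₁. -/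
open Finset

/-- For an XOS function f, the total influence satisfies
Σ_i E[|∂_i f(x)|] ≤ 2 E[f(x)]. -/
theorem stmt13 {n : ℕ} (f : (Fin n → Bool) → ℝ) (hf : IsXOS f) :
    ∑ i : Fin n, EU (fun x => |d1 f i x|) ≤ 2 * EU f := by
  obtain ⟨m, w, hw, hfx⟩ := hf
  -- monotonicity in each coordinate
  have hmono : ∀ (i : Fin n) (x : Fin n → Bool),
      f (Function.update x i false) ≤ f (Function.update x i true) := by
    intro i x
    rw [hfx, hfx]
    apply Finset.sup'_mono_fun
    intro c _
    apply Finset.sum_le_sum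
    intro j _
    rcases eq_or_ne j i with hj | hj
    · subst hj
      simp only [Function.update_self, bval]
      simpa using mul_le_mul_of_nonneg_left (by norm_num : (0:ℝ) ≤ 1) (hw c j)
    · rw [Function.update_of_ne hj, Function.update_of_ne hj]
  -- pointwise key inequality
  have hkey : ∀ x, ∑ i, (f x - f (Function.update x i false)) ≤ f x := by
    intro x
    obtain ⟨c, -, hcx⟩ := Finset.exists_mem_eq_sup' Finset.univ_nonempty
      (fun c => ∑ i, w c i * bval (x i))
    have hfxc : f x = ∑ j, w c j * bval (x j) := by rw [hfx]; exact hcx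
    have hlow : ∀ i, f x - w c i * bval (x i) ≤ f (Function.update x i false) := by
      intro i
      have hsum : ∑ j, w c j * bval (Function.update x i false j)
          = (∑ j, w c j * bval (x j)) - w c i * bval (x i) := by
        rw [Fintype.sum_eq_add_sum_compl i, Fintype.sum_eq_add_sum_compl i
          (fun j => w c j * bval (x j))]
        have h1 : ∑ j ∈ {i}ᶜ, w c j * bval (Function.update x i false j)
            = ∑ j ∈ {i}ᶜ, w c j * bval (x j) := by
          apply Finset.sum_congr rfl
          intro j hj
          have hj' : j ≠ i := by simpa using hj
          rw [Function.update_of_ne hj']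
        rw [h1]
        simp [bval]
      calc f x - w c i * bval (x i)
          = ∑ j, w c j * bval (Function.update x i false j) := by rw [hfxc, hsum]
        _ ≤ f (Function.update x i false) := by
            rw [hfx]
            exact Finset.le_sup'
              (fun c => ∑ j, w c j * bval (Function.update x i false j))
              (Finset.mem_univ c)
    calc ∑ i, (f x - f (Function.update x i false))
        ≤ ∑ i, w c i * bval (x i) := by
          apply Finset.sum_le_sum
          intro i _
          linarith [hlow i]
      _ = f x := hfxc.symm
  -- flipping coordinate i
  have hflip : ∀ i : Fin n,
      (∑ x : Fin n → Bool, f (Function.update x i true))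
        + (∑ x : Fin n → Bool, f (Function.update x i false))
      = 2 * ∑ x : Fin n → Bool, f x := by
    intro i
    have hinv : Function.Involutive
        (fun x : Fin n → Bool => Function.update x i (!(x i))) := by
      intro x
      funext j
      rcases eq_or_ne j i with hj | hj
      · subst hj; simp
      · simp [Function.update_of_ne hj]
    set σ := hinv.toPerm with hσ
    have hσx : ∀ x, σ x = Function.update x i (!(x i)) := fun x => rfl
    have hcomp : ∑ x : Fin n → Bool, f (σ x) = ∑ x : Fin n → Bool, f x :=
      Equiv.sum_comp σ f
    have hpt : ∀ x : Fin n → Bool,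
        f (Function.update x i true) + f (Function.update x i false)
        = f x + f (σ x) := by
      intro x
      rw [hσx]
      cases hx : x i
      · have h1 : Function.update x i false = x := by
          conv_rhs => rw [← Function.update_eq_self i x]
          rw [hx]
        simp only [Bool.not_false]
        rw [h1]
        ring
      · have h1 : Function.update x i true = x := by
          conv_rhs => rw [← Function.update_eq_self i x]
          rw [hx]
        simp only [Bool.not_true]
        rw [h1]
    calc (∑ x : Fin n → Bool, f (Function.update x i true))
          + (∑ x : Fin n → Bool, f (Function.update x i false))
        = ∑ x : Fin n → Bool,
            (f (Function.update x i true) + f (Function.update x i false)) := by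
          rw [Finset.sum_add_distrib]
      _ = ∑ x : Fin n → Bool, (f x + f (σ x)) := by
          exact Finset.sum_congr rfl (fun x _ => hpt x)
      _ = (∑ x : Fin n → Bool, f x) + ∑ x : Fin n → Bool, f (σ x) := by
          rw [Finset.sum_add_distrib]
      _ = 2 * ∑ x : Fin n → Bool, f x := by rw [hcomp]; ring
  -- sum of d1 over x
  have hd1sum : ∀ i : Fin n,
      ∑ x : Fin n → Bool, d1 f i x
      = 2 * ∑ x : Fin n → Bool, (f x - f (Function.update x i false)) := by
    intro i
    have h1 : ∑ x : Fin n → Bool, d1 f i x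
        = (∑ x : Fin n → Bool, f (Function.update x i true))
          - ∑ x : Fin n → Bool, f (Function.update x i false) := by
      unfold d1
      rw [Finset.sum_sub_distrib]
    have h2 : ∑ x : Fin n → Bool, (f x - f (Function.update x i false))
        = (∑ x : Fin n → Bool, f x)
          - ∑ x : Fin n → Bool, f (Function.update x i false) := by
      rw [Finset.sum_sub_distrib]
    have := hflip i
    rw [h1, h2]
    linarith
  -- the main sum inequality
  have hmain : ∑ i : Fin n, ∑ x : Fin n → Bool, |d1 f i x|
      ≤ 2 * ∑ x : Fin n → Bool, f x := by
    have habs : ∀ i x, |d1 f i x| = d1 f i x := by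
      intro i x
      exact abs_of_nonneg (by unfold d1; linarith [hmono i x])
    calc ∑ i : Fin n, ∑ x : Fin n → Bool, |d1 f i x|
        = ∑ i : Fin n, ∑ x : Fin n → Bool, d1 f i x := by
          exact Finset.sum_congr rfl (fun i _ =>
            Finset.sum_congr rfl (fun x _ => habs i x))
      _ = ∑ i : Fin n, 2 * ∑ x : Fin n → Bool, (f x - f (Function.update x i false)) := by
          exact Finset.sum_congr rfl (fun i _ => hd1sum i)
      _ = 2 * ∑ x : Fin n → Bool, ∑ i : Fin n, (f x - f (Function.update x i false)) := by
          rw [← Finset.mul_sum, Finset.sum_comm]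
      _ ≤ 2 * ∑ x : Fin n → Bool, f x := by
          have := Finset.sum_le_sum (fun x (_ : x ∈ (Finset.univ : Finset (Fin n → Bool))) => hkey x)
          linarith
  -- conclude
  unfold EU
  rw [← Finset.sum_div, ← mul_div_assoc]
  exact (div_le_div_iff_of_pos_right (by positivity)).mpr hmain
end

section
/- Let t ≥ 1 be an integer and let f : {0,1}^{2t} → [0,1] be any function such that f(x) = min{1, w(x)/t} whenever the Hamming weight w(x) = Σ_{i=1}^{2t} x_i is not equal to t, and f(x) ∈ {1 − 1/(2t), 1} whenever w(x) = t. Then f is monotone and submodular. -/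
open Finset

lemma wt_mono {n : ℕ} {x y : Fin n → Bool} (h : x ≤ y) : wt x ≤ wt y :=
  Finset.sum_le_sum fun i _ => Bool.toNat_le_toNat (h i)

lemma eq_of_le_wt {n : ℕ} {x y : Fin n → Bool} (h : x ≤ y) (hw : wt y ≤ wt x) : x = y := by
  funext i
  by_contra hne
  have hi : x i = false ∧ y i = true := by
    have hn := Bool.toNat_le_toNat (h i)
    cases hx : x i <;> cases hy : y i <;> simp_all
  have : wt x < wt y := by
    refine Finset.sum_lt_sum (fun j _ => Bool.toNat_le_toNat (h j))
      ⟨i, Finset.mem_univ i, by simp [hi.1, hi.2]⟩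
  omega

lemma wt_sup_add_inf {n : ℕ} (x y : Fin n → Bool) :
    wt (x ⊔ y) + wt (x ⊓ y) = wt x + wt y := by
  unfold wt
  rw [← Finset.sum_add_distrib, ← Finset.sum_add_distrib]
  refine Finset.sum_congr rfl fun i _ => ?_
  show ((x i ⊔ y i).toNat) + ((x i ⊓ y i).toNat) = _
  cases x i <;> cases y i <;> rfl


lemma keylem (t : ℕ) (ht : 1 ≤ t) (a b c d : ℕ) (hsum : a + b = c + d)
    (hac : a < c) (had : a < d) (hcb : c < b) (hdb : d < b) :
    min 1 ((a:ℝ)/t) + min 1 ((b:ℝ)/t)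
      + (if c = t then 1/(2*(t:ℝ)) else 0)
      + (if d = t then 1/(2*(t:ℝ)) else 0)
      ≤ min 1 ((c:ℝ)/t) + min 1 ((d:ℝ)/t) := by
  have hT0 : (0:ℝ) < t := by exact_mod_cast ht
  have gle : ∀ w : ℕ, w ≤ t → min 1 ((w:ℝ)/t) = (w:ℝ)/t := fun w hw =>
    min_eq_right (by rw [div_le_one hT0]; exact_mod_cast hw)
  have gge : ∀ w : ℕ, t ≤ w → min 1 ((w:ℝ)/t) = 1 := fun w hw =>
    min_eq_left (by rw [le_div_iff₀ hT0, one_mul]; exact_mod_cast hw)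
  have half : 1/(2*(t:ℝ)) ≤ 1/(t:ℝ) :=
    one_div_le_one_div_of_le hT0 (by linarith)
  have hif : ∀ w : ℕ, (if w = t then 1/(2*(t:ℝ)) else 0) ≤ 1/(2*(t:ℝ)) := by
    intro w; split
    · exact le_refl _
    · positivity
  have hifne : ∀ w : ℕ, w ≠ t → (if w = t then 1/(2*(t:ℝ)) else 0) = 0 := by
    intro w hw; simp [hw]
  rcases le_or_gt t a with hta | hta
  · rw [gge a hta, gge b (by omega), gge c (by omega), gge d (by omega),
        hifne c (by omega), hifne d (by omega)]
    norm_num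
  rcases le_or_gt b t with hbt | hbt
  · rw [gle a (by omega), gle b hbt, gle c (by omega), gle d (by omega),
        hifne c (by omega), hifne d (by omega)]
    have hh : (a:ℝ) + b = (c:ℝ) + d := by exact_mod_cast hsum
    rw [← add_div, ← add_div, hh]
    norm_num
  rw [gle a (le_of_lt hta), gge b (le_of_lt hbt)]
  rcases le_or_gt t c with htc | htc <;> rcases le_or_gt t d with htd | htd
  · rw [gge c htc, gge d htd]
    have h1 : (a:ℝ) + 1 ≤ t := by exact_mod_cast hta
    have h3 : ((a:ℝ) + 1)/t ≤ 1 := (div_le_one hT0).2 h1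
    have h4 : ((a:ℝ) + 1)/t = (a:ℝ)/t + 1/t := by rw [add_div]
    have h5 : 1/(2*(t:ℝ)) + 1/(2*(t:ℝ)) = 1/(t:ℝ) := by
      field_simp
      norm_num
    have := hif c; have := hif d
    linarith
  · rw [gge c htc, gle d (le_of_lt htd), hifne d (by omega)]
    have h1 : (a:ℝ) + 1 ≤ d := by exact_mod_cast had
    have h3 : ((a:ℝ) + 1)/t ≤ (d:ℝ)/t := by gcongr
    have h4 : ((a:ℝ) + 1)/t = (a:ℝ)/t + 1/t := by rw [add_div]
    have := hif c
    linarith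
  · rw [gge d htd, gle c (le_of_lt htc), hifne c (by omega)]
    have h1 : (a:ℝ) + 1 ≤ c := by exact_mod_cast hac
    have h3 : ((a:ℝ) + 1)/t ≤ (c:ℝ)/t := by gcongr
    have h4 : ((a:ℝ) + 1)/t = (a:ℝ)/t + 1/t := by rw [add_div]
    have := hif d
    linarith
  · rw [gle c (le_of_lt htc), gle d (le_of_lt htd), hifne c (by omega), hifne d (by omega)]
    have h1 : (a:ℝ) + t ≤ (c:ℝ) + d := by
      have : a + t ≤ c + d := by omega
      exact_mod_cast this
    have h3 : ((a:ℝ) + t)/t ≤ ((c:ℝ) + d)/t := by gcongr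
    have h4 : ((a:ℝ) + t)/t = (a:ℝ)/t + 1 := by
      rw [add_div, div_self (ne_of_gt hT0)]
    have h5 : ((c:ℝ) + d)/t = (c:ℝ)/t + (d:ℝ)/t := by rw [add_div]
    linarith

lemma mono_step (t : ℕ) (ht : 1 ≤ t) (u v : ℕ) (huv : u < v) :
    min 1 ((u:ℝ)/t) + (if v = t then 1/(2*(t:ℝ)) else 0) ≤ min 1 ((v:ℝ)/t) := by
  have hT0 : (0:ℝ) < t := by exact_mod_cast ht
  by_cases hv : v = t
  · rw [if_pos hv]
    have hg : min 1 ((v:ℝ)/t) = 1 := min_eq_left (by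
      rw [le_div_iff₀ hT0, one_mul]; exact_mod_cast hv.ge)
    have hu : min 1 ((u:ℝ)/t) = (u:ℝ)/t := min_eq_right (by
      rw [div_le_one hT0]; exact_mod_cast by omega)
    have h1 : ((u:ℝ) + 1)/t ≤ 1 := (div_le_one hT0).2 (by exact_mod_cast by omega)
    have h4 : ((u:ℝ) + 1)/t = (u:ℝ)/t + 1/t := by rw [add_div]
    have half : 1/(2*(t:ℝ)) ≤ 1/(t:ℝ) := one_div_le_one_div_of_le hT0 (by linarith)
    rw [hg, hu]
    linarith
  · rw [if_neg hv, add_zero]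
    exact min_le_min (le_refl _) (by gcongr <;> exact_mod_cast huv.le)


/-- Let t ≥ 1 and f : {0,1}^{2t} → [0,1] with f(x) = min{1, w(x)/t}
whenever w(x) ≠ t and f(x) ∈ {1 − 1/(2t), 1} whenever w(x) = t. Then f is
monotone and submodular. -/
theorem stmt15 (t : ℕ) (ht : 1 ≤ t) (f : (Fin (2 * t) → Bool) → ℝ)
    (h1 : ∀ x, wt x ≠ t → f x = min 1 ((wt x : ℝ) / t))
    (h2 : ∀ x, wt x = t → f x = 1 - 1 / (2 * t) ∨ f x = 1) :
    (∀ x y, x ≤ y → f x ≤ f y) ∧ Submodular f := by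
  have hT0 : (0:ℝ) < t := by exact_mod_cast ht
  have hub : ∀ x, f x ≤ min 1 ((wt x : ℝ)/t) := by
    intro x
    by_cases hx : wt x = t
    · have h1t : min 1 ((wt x:ℝ)/t) = 1 := min_eq_left (by
        rw [le_div_iff₀ hT0, one_mul]; exact_mod_cast hx.ge)
      rw [h1t]
      rcases h2 x hx with h | h <;> rw [h]
      have : (0:ℝ) ≤ 1/(2*(t:ℝ)) := by positivity
      linarith
    · rw [h1 x hx]
  have hlb : ∀ x, min 1 ((wt x:ℝ)/t) - (if wt x = t then 1/(2*(t:ℝ)) else 0) ≤ f x := by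
    intro x
    by_cases hx : wt x = t
    · have h1t : min 1 ((wt x:ℝ)/t) = 1 := min_eq_left (by
        rw [le_div_iff₀ hT0, one_mul]; exact_mod_cast hx.ge)
      rw [h1t, if_pos hx]
      rcases h2 x hx with h | h <;> rw [h]
      have : (0:ℝ) ≤ 1/(2*(t:ℝ)) := by positivity
      linarith
    · rw [h1 x hx, if_neg hx, sub_zero]
  constructor
  · intro x y hxy
    rcases eq_or_lt_of_le (wt_mono hxy) with he | hlt
    · rw [eq_of_le_wt hxy he.ge]
    · have hstep := mono_step t ht (wt x) (wt y) hlt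
      have := hub x
      have := hlb y
      linarith
  · intro x y
    have hkey := wt_sup_add_inf x y
    by_cases hbx : wt (x ⊔ y) ≤ wt x
    · have e1 : x ⊔ y = x := (eq_of_le_wt le_sup_left hbx).symm
      have e2 : x ⊓ y = y := eq_of_le_wt inf_le_right (by
        have := wt_mono (le_sup_left : x ≤ x ⊔ y); omega)
      rw [e1, e2]
    · by_cases hby : wt (x ⊔ y) ≤ wt y
      · have e1 : x ⊔ y = y := (eq_of_le_wt le_sup_right hby).symm
        have e2 : x ⊓ y = x := eq_of_le_wt inf_le_left (by
          have := wt_mono (le_sup_right : y ≤ x ⊔ y); omega)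
        rw [e1, e2]
        linarith
      · push_neg at hbx hby
        have hk := keylem t ht (wt (x ⊓ y)) (wt (x ⊔ y)) (wt x) (wt y)
          (by omega) (by omega) (by omega) hbx hby
        have h1 := hub (x ⊔ y)
        have h2 := hub (x ⊓ y)
        have h3 := hlb x
        have h4 := hlb y
        linarith
end

section
/- Let h : {0,1}^k → {0,1} be computed by a monotone DNF with s terms, h(x) = ⋁_{j=1}^s ⋀_{i ∈ T_j} x_i, where each T_j ⊆ [k] is nonempty and |T_j| ≤ t for an integer t ≥ 1. Define f : {0,1}^k → [0,1] by f(0) = 0 (where 0 is the all-zeroes vector) and f(x) = 1 − (1 − h(x))/t for x ≠ 0. Then f is an XOS function; in fact f(x) = max{ max_{j∈[s]} (Σ_{i∈T_j} x_i)/|T_j| , max_{i∈[k]} ((t−1)/t) x_i }, a maximum of s + k nonnegative linear functions. -/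
open Finset

lemma sumA {k : ℕ} (S : Finset (Fin k)) (a : ℝ) (x : Fin k → Bool) :
    (∑ i, (if i ∈ S then a else 0) * bval (x i)) = a * ∑ i ∈ S, bval (x i) := by
  simp only [ite_mul, zero_mul, Finset.sum_ite_mem, Finset.univ_inter, Finset.mul_sum]

lemma sumB {k : ℕ} (i0 : Fin k) (a : ℝ) (x : Fin k → Bool) :
    (∑ i, (if i = i0 then a else 0) * bval (x i)) = a * bval (x i0) := by
  simp only [ite_mul, zero_mul, Finset.sum_ite_eq', Finset.mem_univ, if_true]

open Classical in
/-- If h is computed by a monotone DNF with s nonempty terms of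
size at most t, and f(0) = 0, f(x) = 1 − (1 − h(x))/t for x ≠ 0, then f is XOS;
in fact f(x) = max{ max_j (Σ_{i∈T_j} x_i)/|T_j| , max_i ((t−1)/t)·x_i }. -/
theorem stmt16 (k s t : ℕ) (hs0 : 0 < s) (hk0 : 0 < k) (ht : 1 ≤ t)
    (T : Fin s → Finset (Fin k))
    (hTne : ∀ j, (T j).Nonempty) (hTt : ∀ j, (T j).card ≤ t)
    (h : (Fin k → Bool) → ℝ)
    (hh : ∀ x, h x = if ∃ j, ∀ i ∈ T j, x i = true then 1 else 0)
    (f : (Fin k → Bool) → ℝ)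
    (hf0 : f (fun _ => false) = 0)
    (hf : ∀ x, x ≠ (fun _ => false) → f x = 1 - (1 - h x) / t) :
    IsXOS f ∧ ∀ x, f x =
      max ((Finset.univ : Finset (Fin s)).sup' ⟨⟨0, hs0⟩, Finset.mem_univ _⟩
            (fun j => (∑ i ∈ T j, bval (x i)) / ((T j).card : ℝ)))
          ((Finset.univ : Finset (Fin k)).sup' ⟨⟨0, hk0⟩, Finset.mem_univ _⟩
            (fun i => ((t : ℝ) - 1) / t * bval (x i))) := by

  classical
  have hbnn : ∀ b, (0:ℝ) ≤ bval b := fun b => by unfold bval; split <;> norm_num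
  have hble : ∀ b, bval b ≤ 1 := fun b => by unfold bval; split <;> norm_num
  have ht0 : (0:ℝ) < (t:ℝ) := by exact_mod_cast ht
  have ht1 : (1:ℝ) ≤ (t:ℝ) := by exact_mod_cast ht
  have htn : (0:ℝ) ≤ ((t:ℝ)-1)/t := div_nonneg (by linarith) ht0.le
  have htl1 : ((t:ℝ)-1)/t ≤ 1 := by rw [div_le_one ht0]; linarith
  have hcard : ∀ j, (0:ℝ) < ((T j).card : ℝ) := fun j => by
    exact_mod_cast Finset.card_pos.2 (hTne j)
  have hsumle : ∀ (x : Fin k → Bool) j, (∑ i ∈ T j, bval (x i)) ≤ ((T j).card : ℝ) := by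
    intro x j
    calc (∑ i ∈ T j, bval (x i)) ≤ ∑ i ∈ T j, 1 := Finset.sum_le_sum (fun i _ => hble _)
      _ = ((T j).card : ℝ) := by simp
  have hsumnn : ∀ (x : Fin k → Bool) j, (0:ℝ) ≤ ∑ i ∈ T j, bval (x i) :=
    fun x j => Finset.sum_nonneg (fun i _ => hbnn _)
  -- the key formula
  have key : ∀ x, f x =
      max ((Finset.univ : Finset (Fin s)).sup' ⟨⟨0, hs0⟩, Finset.mem_univ _⟩
            (fun j => (∑ i ∈ T j, bval (x i)) / ((T j).card : ℝ)))
          ((Finset.univ : Finset (Fin k)).sup' ⟨⟨0, hk0⟩, Finset.mem_univ _⟩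
            (fun i => ((t : ℝ) - 1) / t * bval (x i))) := by
    intro x
    by_cases hx : x = (fun _ => false)
    · subst hx
      rw [hf0]
      have h1 : ∀ i : Fin k, bval ((fun _ => false) i) = 0 := fun _ => rfl
      simp only [h1, (show bval false = (0:ℝ) from rfl), Finset.sum_const_zero, zero_div,
        mul_zero, Finset.sup'_const, max_self]
      exact ((congrArg₂ max (Finset.sup'_const _ (0:ℝ)) (Finset.sup'_const _ (0:ℝ))).trans
        (max_self (0:ℝ))).symm
    · have hi0 : ∃ i0, x i0 = true := by
        by_contra hc
        push_neg at hc
        exact hx (funext fun i => by simpa using hc i)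
      obtain ⟨i0, hi0⟩ := hi0
      rw [hf x hx, hh x]
      by_cases hex : ∃ j, ∀ i ∈ T j, x i = true
      · rw [if_pos hex]
        have hfx : (1:ℝ) - (1 - 1)/t = 1 := by norm_num
        rw [hfx]
        obtain ⟨j0, hj0⟩ := hex
        apply le_antisymm
        · refine le_trans ?_ (le_max_left _ _)
          refine Finset.le_sup'_of_le _ (Finset.mem_univ j0) ?_
          have : (∑ i ∈ T j0, bval (x i)) = ((T j0).card : ℝ) := by
            rw [Finset.sum_congr rfl (fun i hi => by rw [hj0 i hi])]
            simp [bval]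
          rw [this, div_self (hcard j0).ne']
        · apply max_le
          · apply Finset.sup'_le
            intro j _
            rw [div_le_one (hcard j)]
            exact hsumle x j
          · apply Finset.sup'_le
            intro i _
            calc ((t:ℝ)-1)/t * bval (x i) ≤ ((t:ℝ)-1)/t * 1 :=
                  mul_le_mul_of_nonneg_left (hble _) htn
              _ ≤ 1 := by linarith
      · rw [if_neg hex]
        push_neg at hex
        have hfx : (1:ℝ) - (1 - 0)/t = ((t:ℝ)-1)/t := by field_simp; ring
        rw [hfx]
        apply le_antisymm
        · refine le_trans ?_ (le_max_right _ _)
          refine Finset.le_sup'_of_le _ (Finset.mem_univ i0) ?_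
          rw [hi0]
          simp [bval]
        · apply max_le
          · apply Finset.sup'_le
            intro j _
            obtain ⟨i1, hi1, hxi1⟩ := hex j
            have hxi1' : x i1 = false := by
              cases hxi : x i1
              · rfl
              · exact absurd hxi hxi1
            have hsum : (∑ i ∈ T j, bval (x i)) ≤ ((T j).card : ℝ) - 1 := by
              have hb : bval (x i1) = 0 := by rw [hxi1']; rfl
              have h2 : (∑ i ∈ (T j).erase i1, bval (x i)) ≤ (((T j).erase i1).card : ℝ) := by
                calc (∑ i ∈ (T j).erase i1, bval (x i)) ≤ ∑ i ∈ (T j).erase i1, 1 :=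
                      Finset.sum_le_sum (fun i _ => hble _)
                  _ = (((T j).erase i1).card : ℝ) := by simp
              rw [Finset.card_erase_of_mem hi1] at h2
              have hc1 : 1 ≤ (T j).card := Finset.card_pos.2 (hTne j)
              have h4 : (((T j).card - 1 : ℕ) : ℝ) = ((T j).card : ℝ) - 1 := by
                push_cast [hc1]; ring
              rw [h4] at h2
              have h3 := Finset.sum_erase_add (T j) (fun i => bval (x i)) hi1
              simp only [hb, add_zero] at h3
              rw [← h3]
              exact h2
            have hct : ((T j).card : ℝ) ≤ (t:ℝ) := by exact_mod_cast hTt j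
            have hc1 : (1:ℝ) ≤ ((T j).card : ℝ) := by
              exact_mod_cast Finset.card_pos.2 (hTne j)
            rw [div_le_div_iff₀ (hcard j) ht0]
            nlinarith [hsum, hct, hc1]
          · apply Finset.sup'_le
            intro i _
            calc ((t:ℝ)-1)/t * bval (x i) ≤ ((t:ℝ)-1)/t * 1 :=
                  mul_le_mul_of_nonneg_left (hble _) htn
              _ = ((t:ℝ)-1)/t := by ring
  refine ⟨?_, key⟩
  refine ⟨s + k - 1, fun c =>
      if hc : (c : ℕ) < s then
        (fun i => if i ∈ T ⟨(c : ℕ), hc⟩ then ((T ⟨(c : ℕ), hc⟩).card : ℝ)⁻¹ else 0)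
      else
        (fun i => if i = (⟨(c : ℕ) - s, by have := c.isLt; omega⟩ : Fin k)
                  then ((t:ℝ)-1)/t else 0),
    ?_, ?_⟩
  · intro c i
    by_cases hc : (c : ℕ) < s
    · simp only [dif_pos hc]
      split
      · positivity
      · exact le_rfl
    · simp only [dif_neg hc]
      split
      · exact htn
      · exact le_rfl
  · intro x
    rw [key x]
    apply le_antisymm
    · apply max_le
      · apply Finset.sup'_le
        intro j _
        have pj : (j : ℕ) < s + k - 1 + 1 := by have := j.isLt; omega
        refine Finset.le_sup'_of_le _
          (Finset.mem_univ (⟨(j:ℕ), pj⟩ : Fin (s + k - 1 + 1))) ?_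
        have hc : ((⟨(j:ℕ), pj⟩ : Fin (s + k - 1 + 1)) : ℕ) < s := j.isLt
        simp only [dif_pos hc, Fin.eta, sumA]
        exact le_of_eq (div_eq_inv_mul _ _)
      · apply Finset.sup'_le
        intro i _
        have pi : s + (i : ℕ) < s + k - 1 + 1 := by have := i.isLt; omega
        refine Finset.le_sup'_of_le _
          (Finset.mem_univ (⟨s + (i:ℕ), pi⟩ : Fin (s + k - 1 + 1))) ?_
        have hc : ¬ ((⟨s + (i:ℕ), pi⟩ : Fin (s + k - 1 + 1)) : ℕ) < s := by simp
        simp only [dif_neg hc, sumB]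
        have he : ∀ (pf : s + (i:ℕ) - s < k), (⟨s + (i:ℕ) - s, pf⟩ : Fin k) = i :=
          fun pf => Fin.ext (by simp)
        rw [he]
    · apply Finset.sup'_le
      intro c _
      by_cases hc : (c : ℕ) < s
      · simp only [dif_pos hc, sumA]
        refine le_trans ?_ (le_max_left _ _)
        refine Finset.le_sup'_of_le _ (Finset.mem_univ (⟨(c:ℕ), hc⟩ : Fin s)) ?_
        exact le_of_eq (div_eq_inv_mul _ _).symm
      · simp only [dif_neg hc, sumB]
        refine le_trans ?_ (le_max_right _ _)
        have pk : (c : ℕ) - s < k := by have := c.isLt; omega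
        exact Finset.le_sup'_of_le _ (Finset.mem_univ (⟨(c:ℕ) - s, pk⟩ : Fin k)) le_rfl
end
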